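/- arXiv:1509.03406 — 9 statements merged into one kernel-verified Lean document; each statement's English description precedes it below -/
import Mathlib

section
/- Let K be a field and μ_1, μ_2, μ_3, μ_4 ∈ K pairwise distinct. Then ∑_{1 ≤ i < j ≤ 4} ( (μ_i + μ_j)² · μ_i · μ_j ) / ∏_{k ∈ {1,2,3,4} \ {i,j}} ( (μ_k − μ_i)(μ_k − μ_j) ) = 1. -/
theorem aux_loc24 {K : Type*} [Field K] (a b c d : K)
    (hab : a - b ≠ 0) (hac : a - c ≠ 0) (had : a - d ≠ 0)
    (hbc : b - c ≠ 0) (hbd : b - d ≠ 0) (hcd : c - d ≠ 0) :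
    (a + b) ^ 2 * a * b / ((c - a) * (c - b) * ((d - a) * (d - b))) +
    (a + c) ^ 2 * a * c / ((b - a) * (b - c) * ((d - a) * (d - c))) +
    (a + d) ^ 2 * a * d / ((b - a) * (b - d) * ((c - a) * (c - d))) +
    (b + c) ^ 2 * b * c / ((a - b) * (a - c) * ((d - b) * (d - c))) +
    (b + d) ^ 2 * b * d / ((a - b) * (a - d) * ((c - b) * (c - d))) +
    (c + d) ^ 2 * c * d / ((a - c) * (a - d) * ((b - c) * (b - d))) = 1 := by
  have hba : b - a ≠ 0 := fun h => hab (by linear_combination -h)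
  have hca : c - a ≠ 0 := fun h => hac (by linear_combination -h)
  have hda : d - a ≠ 0 := fun h => had (by linear_combination -h)
  have hcb : c - b ≠ 0 := fun h => hbc (by linear_combination -h)
  have hdb : d - b ≠ 0 := fun h => hbd (by linear_combination -h)
  have hdc : d - c ≠ 0 := fun h => hcd (by linear_combination -h)
  set D := (a-b)*(a-c)*(a-d)*(b-c)*(b-d)*(c-d) with hDdef
  have hD : D ≠ 0 := by
    apply mul_ne_zero (mul_ne_zero (mul_ne_zero (mul_ne_zero (mul_ne_zero hab hac) had) hbc) hbd) hcd
  have e1 : (a + b) ^ 2 * a * b / ((c - a) * (c - b) * ((d - a) * (d - b)))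
      = (a + b) ^ 2 * a * b * ((a-b)*(c-d)) / D := by
    rw [div_eq_div_iff (by exact mul_ne_zero (mul_ne_zero hca hcb) (mul_ne_zero hda hdb)) hD, hDdef]
    ring
  have e2 : (a + c) ^ 2 * a * c / ((b - a) * (b - c) * ((d - a) * (d - c)))
      = -((a + c) ^ 2 * a * c * ((a-c)*(b-d))) / D := by
    rw [div_eq_div_iff (by exact mul_ne_zero (mul_ne_zero hba hbc) (mul_ne_zero hda hdc)) hD, hDdef]
    ring
  have e3 : (a + d) ^ 2 * a * d / ((b - a) * (b - d) * ((c - a) * (c - d)))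
      = (a + d) ^ 2 * a * d * ((a-d)*(b-c)) / D := by
    rw [div_eq_div_iff (by exact mul_ne_zero (mul_ne_zero hba hbd) (mul_ne_zero hca hcd)) hD, hDdef]
    ring
  have e4 : (b + c) ^ 2 * b * c / ((a - b) * (a - c) * ((d - b) * (d - c)))
      = (b + c) ^ 2 * b * c * ((b-c)*(a-d)) / D := by
    rw [div_eq_div_iff (by exact mul_ne_zero (mul_ne_zero hab hac) (mul_ne_zero hdb hdc)) hD, hDdef]
    ring
  have e5 : (b + d) ^ 2 * b * d / ((a - b) * (a - d) * ((c - b) * (c - d)))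
      = -((b + d) ^ 2 * b * d * ((b-d)*(a-c))) / D := by
    rw [div_eq_div_iff (by exact mul_ne_zero (mul_ne_zero hab had) (mul_ne_zero hcb hcd)) hD, hDdef]
    ring
  have e6 : (c + d) ^ 2 * c * d / ((a - c) * (a - d) * ((b - c) * (b - d)))
      = (c + d) ^ 2 * c * d * ((c-d)*(a-b)) / D := by
    rw [div_eq_div_iff (by exact mul_ne_zero (mul_ne_zero hac had) (mul_ne_zero hbc hbd)) hD, hDdef]
    ring
  rw [e1, e2, e3, e4, e5, e6, ← add_div, ← add_div, ← add_div,
    ← add_div, ← add_div, div_eq_one_iff_eq hD, hDdef]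
  ring

/-- **Localisation on `Gr(2,4)`** (Example 3.2/3.3): for pairwise distinct `μ_1, μ_2, μ_3, μ_4`
in a field `K`,
`∑_{1 ≤ i < j ≤ 4} (μ_i + μ_j)² μ_i μ_j / ∏_{k ∉ {i,j}} (μ_k − μ_i)(μ_k − μ_j) = 1`. -/
theorem abbv_localisation_grass24 {K : Type*} [Field K] (μ : Fin 4 → K)
    (hμ : Function.Injective μ) :
    ∑ p ∈ Finset.univ.filter (fun p : Fin 4 × Fin 4 => p.1 < p.2),
      ((μ p.1 + μ p.2) ^ 2 * μ p.1 * μ p.2) /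
        ∏ k ∈ (Finset.univ.erase p.1).erase p.2, ((μ k - μ p.1) * (μ k - μ p.2)) = 1 := by
  have h : ∀ i j : Fin 4, i ≠ j → μ i - μ j ≠ 0 := fun i j hij =>
    sub_ne_zero.mpr (fun e => hij (hμ e))
  simp only [show (Finset.univ.filter (fun p : Fin 4 × Fin 4 => p.1 < p.2)) =
    {(0,1),(0,2),(0,3),(1,2),(1,3),(2,3)} by decide]
  rw [Finset.sum_insert (by decide), Finset.sum_insert (by decide), Finset.sum_insert (by decide),
    Finset.sum_insert (by decide), Finset.sum_insert (by decide), Finset.sum_singleton]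
  norm_num [show ((Finset.univ : Finset (Fin 4)).erase 0).erase 1 = {2,3} by decide,
    show ((Finset.univ : Finset (Fin 4)).erase 0).erase 2 = {1,3} by decide,
    show ((Finset.univ : Finset (Fin 4)).erase 0).erase 3 = {1,2} by decide,
    show ((Finset.univ : Finset (Fin 4)).erase 1).erase 2 = {0,3} by decide,
    show ((Finset.univ : Finset (Fin 4)).erase 1).erase 3 = {0,2} by decide,
    show ((Finset.univ : Finset (Fin 4)).erase 2).erase 3 = {0,1} by decide]
  rw [Finset.prod_pair (show (2:Fin 4) ≠ 3 by decide), Finset.prod_pair (show (1:Fin 4) ≠ 3 by decide),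
    Finset.prod_pair (show (1:Fin 4) ≠ 2 by decide), Finset.prod_pair (show (0:Fin 4) ≠ 3 by decide),
    Finset.prod_pair (show (0:Fin 4) ≠ 2 by decide)]
  have := aux_loc24 (μ 0) (μ 1) (μ 2) (μ 3) (h 0 1 (by decide)) (h 0 2 (by decide))
    (h 0 3 (by decide)) (h 1 2 (by decide)) (h 1 3 (by decide)) (h 2 3 (by decide))
  linear_combination this
end

section
/- Let V be a vector space over ℚ, n ≥ 1 an integer, and λ_1, …, λ_n ∈ V linearly independent. Let i ≥ 1 and let w_1, …, w_i ∈ V satisfy w_j ∈ S(w_1, …, w_{j−1}) for every 1 ≤ j ≤ i. Then S(w_1, …, w_i) = ( {λ_m − (w_1 + ⋯ + w_i) : 1 ≤ m ≤ n} ∪ {w_s − (w_{s+1} + ⋯ + w_i) : 1 ≤ s ≤ i−1} ∪ {w_i} ) \ ( {0} ∪ { −(w_t + w_{t+1} + ⋯ + w_i) : 2 ≤ t ≤ i } ), where for i = 1 the subtracted set is just {0}. -/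
/-- The recursively defined weight sets of the Demailly–Semple tower:
`SW lam [w_j, …, w_1] = S(w_1, …, w_j)`, where `S() = lam` and
`S(w_1, …, w_j) = ({w_j} ∪ {w − w_j : w ∈ S(w_1, …, w_{j−1})}) \ {0}`.
(The list argument records the weights in reverse order, most recent first.) -/
def SW {V : Type*} [AddCommGroup V] [Module ℚ V] (lam : Set V) : List V → Set V
  | [] => lam
  | w :: ws => (insert w ((fun x => x - w) '' SW lam ws)) \ {0}

/-- `sR w s t = w_s + w_{s+1} + ⋯ + w_t` (1-based indices; `0` if `s > t`). -/
def sR {V : Type*} [AddCommGroup V] {i : ℕ} (w : Fin i → V) (s t : ℕ) : V :=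
  ∑ j ∈ Finset.univ.filter (fun j : Fin i => s ≤ j.val + 1 ∧ j.val + 1 ≤ t), w j


namespace WeightsAux

def Adm {V : Type*} [AddCommGroup V] [Module ℚ V] (lam : Set V) : List V → Prop
  | [] => True
  | w :: ws => w ∈ SW lam ws ∧ Adm lam ws

section
variable {V : Type*} [AddCommGroup V] [Module ℚ V] {n : ℕ} {lam : Fin n → V}

lemma SW_ne_zero (hlam : LinearIndependent ℚ lam) :
    ∀ (l : List V) (v : V), v ∈ SW (Set.range lam) l → v ≠ 0 := by
  intro l v hv
  cases l with
  | nil => obtain ⟨m, rfl⟩ := hv; exact hlam.ne_zero m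
  | cons a l => exact fun h => hv.2 h

lemma exists_dual (hlam : LinearIndependent ℚ lam) (c : Fin n → ℚ) :
    ∃ f : V →ₗ[ℚ] ℚ, ∀ m, f (lam m) = c m := by
  obtain ⟨q, hq⟩ := Submodule.exists_isCompl (Submodule.span ℚ (Set.range lam))
  let proj := Submodule.linearProjOfIsCompl _ q hq
  let g : (Fin n →₀ ℚ) →ₗ[ℚ] ℚ := Finsupp.lsum ℚ (fun m => LinearMap.id.smulRight (c m))
  refine ⟨g ∘ₗ (hlam.repr : _ →ₗ[ℚ] _) ∘ₗ proj, fun m => ?_⟩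
  have hmem : lam m ∈ Submodule.span ℚ (Set.range lam) := Submodule.subset_span ⟨m, rfl⟩
  have h1 : proj (lam m) = ⟨lam m, hmem⟩ :=
    Submodule.linearProjOfIsCompl_apply_left hq ⟨lam m, hmem⟩
  have h2 : hlam.repr ⟨lam m, hmem⟩ = Finsupp.single m 1 :=
    hlam.repr_eq_single m ⟨lam m, hmem⟩ rfl
  simp only [LinearMap.comp_apply, h1, LinearMap.coe_coe]
  rw [h2]; simp [g]

lemma exists_mono (hlam : LinearIndependent ℚ lam) :
    ∀ (l : List V), Adm (Set.range lam) l → ∀ ρ : V → ℚ,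
    (∀ v ∈ SW (Set.range lam) l, 0 ≤ ρ v) →
    ∃ f : V →ₗ[ℚ] ℚ, (∀ a ∈ l, 0 ≤ f a) ∧ (∀ v ∈ SW (Set.range lam) l, f v = ρ v) := by
  intro l
  induction l with
  | nil =>
    intro _ ρ hρ
    obtain ⟨f, hf⟩ := exists_dual hlam (fun m => ρ (lam m))
    refine ⟨f, by simp, ?_⟩
    rintro v ⟨m, rfl⟩; exact hf m
  | cons a l ih =>
    intro hadm ρ hρ
    classical
    obtain ⟨ha, hadml⟩ := hadm
    have haS : a ∈ SW (Set.range lam) (a :: l) := by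
      refine ⟨Set.mem_insert _ _, ?_⟩
      simpa using SW_ne_zero hlam l a ha
    set ρ' : V → ℚ := fun y => if y = a then ρ a else ρ (y - a) + ρ a with hρ'
    have hρ'nonneg : ∀ v ∈ SW (Set.range lam) l, 0 ≤ ρ' v := by
      intro y hy
      by_cases h : y = a
      · simp only [ρ', h, if_pos rfl]; exact hρ a haS
      · simp only [ρ', if_neg h]
        have hmem : y - a ∈ SW (Set.range lam) (a :: l) := by
          refine ⟨Set.mem_insert_iff.2 (Or.inr ⟨y, hy, rfl⟩), ?_⟩
          simp only [Set.mem_singleton_iff, sub_eq_zero]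
          exact h
        have h2 := hρ _ hmem
        have h3 := hρ a haS
        linarith
    obtain ⟨f, hf1, hf2⟩ := ih hadml ρ' hρ'nonneg
    have hfa : f a = ρ a := by
      have := hf2 a ha
      simpa [ρ'] using this
    refine ⟨f, ?_, ?_⟩
    · intro b hb
      rcases List.mem_cons.1 hb with rfl | hb
      · rw [hfa]; exact hρ b haS
      · exact hf1 b hb
    · rintro v ⟨hv1, hv2⟩
      simp only [Set.mem_singleton_iff] at hv2
      rcases Set.mem_insert_iff.1 hv1 with rfl | ⟨y, hy, rfl⟩
      · exact hfa
      · have hyne : y ≠ a := by rintro rfl; simp at hv2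
        simp only
        rw [map_sub, hf2 y hy, hfa]
        simp [ρ', if_neg hyne]

lemma key_nonzero (hlam : LinearIndependent ℚ lam) {i : ℕ} (w' : Fin i → V)
    (hadm : Adm (Set.range lam) (List.ofFn w').reverse)
    (x : V) (hx : x ∈ SW (Set.range lam) (List.ofFn w').reverse)
    (T : Finset (Fin i)) : x + x + ∑ j ∈ T, w' j ≠ 0 := by
  classical
  obtain ⟨f, hf1, hf2⟩ := exists_mono hlam _ hadm (fun v => if v = x then 1 else 0)
    (by intro v _; split <;> norm_num)
  intro h
  have hfx : f x = 1 := by rw [hf2 x hx]; simp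
  have hfw : ∀ j ∈ T, 0 ≤ f (w' j) := by
    intro j _
    exact hf1 _ (by simp [List.mem_reverse, List.mem_ofFn])
  have h0 : f (x + x + ∑ j ∈ T, w' j) = 0 := by rw [h, map_zero]
  rw [map_add, map_add, hfx, map_sum] at h0
  have : (0:ℚ) ≤ ∑ j ∈ T, f (w' j) := Finset.sum_nonneg hfw
  linarith

lemma adm_of_hw : ∀ (i : ℕ) (w : Fin i → V),
    (∀ j : Fin i, w j ∈ SW (Set.range lam) (((List.ofFn w).take j.val).reverse)) →
    Adm (Set.range lam) (List.ofFn w).reverse := by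
  intro i
  induction i with
  | zero => intro w _; simp [Adm, List.ofFn_zero]
  | succ i ih =>
    intro w hw
    set w' : Fin i → V := Fin.take i (Nat.le_succ i) w with hw'def
    have htake : (List.ofFn w).take i = List.ofFn w' := (Fin.ofFn_take_eq_take_ofFn _ _).symm
    have hsplit : (List.ofFn w).reverse = w (Fin.last i) :: (List.ofFn w').reverse := by
      rw [List.ofFn_succ' w]
      simp [List.concat_eq_append]
      rfl
    rw [hsplit]
    constructor
    · have := hw (Fin.last i)
      rwa [show (Fin.last i).val = i from rfl, htake] at this
    · apply ih
      intro j
      have hj : ((List.ofFn w').take j.val) = ((List.ofFn w).take j.val) := by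
        rw [← htake, List.take_take]
        congr 1
        omega
      have hx : w' j = w (Fin.castLE (Nat.le_succ i) j) := rfl
      rw [hj, hx]
      simpa using hw (Fin.castLE (Nat.le_succ i) j)

lemma sR_eq_ite {i : ℕ} (w : Fin i → V) (s t : ℕ) :
    sR w s t = ∑ j : Fin i, if s ≤ j.val + 1 ∧ j.val + 1 ≤ t then w j else 0 := by
  rw [sR, Finset.sum_filter]

lemma sR_cast {i : ℕ} (w : Fin (i+1) → V) (s t : ℕ) (ht : t ≤ i) :
    sR w s t = sR (Fin.take i (Nat.le_succ i) w) s t := by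
  rw [sR_eq_ite, sR_eq_ite, Fin.sum_univ_castSucc]
  have hlast : ¬(s ≤ (Fin.last i).val + 1 ∧ (Fin.last i).val + 1 ≤ t) := by
    simp only [Fin.val_last]; omega
  rw [if_neg hlast, add_zero]
  rfl

lemma sR_succ {i : ℕ} (w : Fin (i+1) → V) (s : ℕ) (hs : s ≤ i + 1) :
    sR w s (i+1) = sR (Fin.take i (Nat.le_succ i) w) s i + w (Fin.last i) := by
  rw [sR_eq_ite, sR_eq_ite, Fin.sum_univ_castSucc]
  have hlast : (s ≤ (Fin.last i).val + 1 ∧ (Fin.last i).val + 1 ≤ i + 1) := by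
    simp only [Fin.val_last]; omega
  rw [if_pos hlast]
  congr 1
  apply Finset.sum_congr rfl
  intro j _
  have : (s ≤ (Fin.castSucc j).val + 1 ∧ (Fin.castSucc j).val + 1 ≤ i + 1) ↔
      (s ≤ j.val + 1 ∧ j.val + 1 ≤ i) := by
    simp only [Fin.coe_castSucc]
    omega
  rw [if_congr this rfl rfl]
  rfl

lemma sR_empty {i : ℕ} (w : Fin i → V) (s t : ℕ) (h : t < s) : sR w s t = 0 := by
  rw [sR]
  apply Finset.sum_eq_zero
  intro j hj
  simp only [Finset.mem_filter] at hj
  omega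

end
end WeightsAux

open WeightsAux in
/-- **Lemma 4.1**: explicit description of the weight sets `S(w_1, …, w_i)` for admissible
weight sequences, for a linearly independent family `λ_1, …, λ_n` in a `ℚ`-vector space:
`S(w_1,…,w_i) = ({λ_m − (w_1+⋯+w_i)} ∪ {w_s − (w_{s+1}+⋯+w_i) : 1 ≤ s ≤ i−1} ∪ {w_i})
\ ({0} ∪ {−(w_t+⋯+w_i) : 2 ≤ t ≤ i})`. -/
theorem weights_of_demailly_semple_tower {V : Type*} [AddCommGroup V] [Module ℚ V]
    (n : ℕ) (hn : 1 ≤ n) (lam : Fin n → V) (hlam : LinearIndependent ℚ lam)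
    (i : ℕ) (hi : 1 ≤ i) (w : Fin i → V)
    (hw : ∀ j : Fin i, w j ∈ SW (Set.range lam) (((List.ofFn w).take j.val).reverse)) :
    SW (Set.range lam) (List.ofFn w).reverse =
      ({v | ∃ m : Fin n, v = lam m - sR w 1 i} ∪
        {v | ∃ s : Fin i, s.val + 1 ≤ i - 1 ∧ v = w s - sR w (s.val + 2) i} ∪
        {w ⟨i - 1, by omega⟩}) \
      ({0} ∪ {v | ∃ t : ℕ, 2 ≤ t ∧ t ≤ i ∧ v = -sR w t i}) := by
  induction i, hi using Nat.le_induction with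
  | base =>
    have hsR11 : sR w 1 1 = w 0 := by
      rw [sR]
      rw [Finset.filter_true_of_mem (by intro j _; have := j.isLt; omega)]
      exact Fin.sum_univ_one w
    have hlist : (List.ofFn w).reverse = [w 0] := by simp
    rw [hlist]
    ext v
    simp only [SW, Set.mem_diff, Set.mem_insert_iff, Set.mem_image, Set.mem_union,
      Set.mem_setOf_eq, Set.mem_singleton_iff, hsR11]
    constructor
    · rintro ⟨h1, h2⟩
      refine ⟨?_, ?_⟩
      · rcases h1 with rfl | ⟨a, ⟨m, rfl⟩, rfl⟩
        · right
          exact congrArg w (Fin.ext (by norm_num))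
        · left; left; exact ⟨m, rfl⟩
      · rintro (rfl | ⟨t, ht2, ht1, rfl⟩)
        · exact h2 rfl
        · omega
    · rintro ⟨h1, h2⟩
      refine ⟨?_, ?_⟩
      · rcases h1 with ((⟨m, rfl⟩ | ⟨s, hs, _⟩) | rfl)
        · right; exact ⟨lam m, ⟨m, rfl⟩, rfl⟩
        · omega
        · left
          exact congrArg w (Fin.ext (by norm_num))
      · intro h0
        exact h2 (Or.inl h0)
  | succ i hi1 IH =>
    set w' : Fin i → V := Fin.take i (Nat.le_succ i) w with hw'def
    set wl : V := w (Fin.last i) with hwldef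
    have htake : (List.ofFn w).take i = List.ofFn w' := (Fin.ofFn_take_eq_take_ofFn _ _).symm
    have hsplit : (List.ofFn w).reverse = wl :: (List.ofFn w').reverse := by
      rw [List.ofFn_succ' w]
      simp [List.concat_eq_append]
      exact ⟨rfl, rfl⟩
    have hw' : ∀ j : Fin i, w' j ∈ SW (Set.range lam) (((List.ofFn w').take j.val).reverse) := by
      intro j
      have hj : ((List.ofFn w').take j.val) = ((List.ofFn w).take j.val) := by
        rw [← htake, List.take_take]
        congr 1
        omega
      rw [hj]
      show w (Fin.castLE (Nat.le_succ i) j) ∈ _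
      simpa using hw (Fin.castLE (Nat.le_succ i) j)
    have hlast : wl ∈ SW (Set.range lam) (List.ofFn w').reverse := by
      have := hw (Fin.last i)
      rwa [show ((Fin.last i).val) = i from rfl, htake] at this
    have hadm' : Adm (Set.range lam) (List.ofFn w').reverse := adm_of_hw i w' hw'
    have hIH := IH w' hw'
    have hww : ∀ (j : Fin i) (k : Fin (i+1)), (j:ℕ) = (k:ℕ) → w' j = w k := by
      intro j k h
      show w (Fin.castLE (Nat.le_succ i) j) = w k
      exact congrArg w (Fin.ext h)
    have hwl0 : wl ≠ 0 := SW_ne_zero hlam _ _ hlast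
    have hkey : ∀ t : ℕ, wl + wl + sR w' t i ≠ 0 := by
      intro t
      rw [sR]
      exact key_nonzero hlam w' hadm' wl hlast _
    have hkey2 : ∀ t : ℕ, wl ≠ -(sR w' t i + wl) := by
      intro t h
      apply hkey t
      rw [show wl + wl + sR w' t i = wl + (sR w' t i + wl) by abel]
      exact eq_neg_iff_add_eq_zero.mp h
    have e2 : ∀ s : ℕ, s ≤ i + 1 → sR w s (i+1) = sR w' s i + wl :=
      fun s hs => sR_succ w s hs
    have e4 : sR w (i+1) (i+1) = wl := by
      rw [e2 (i+1) le_rfl, sR_empty w' (i+1) i (by omega), zero_add]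
    rw [hsplit]
    have hunf : SW (Set.range lam) (wl :: (List.ofFn w').reverse) =
        (insert wl ((fun x => x - wl) '' SW (Set.range lam) (List.ofFn w').reverse)) \ {0} := rfl
    rw [hunf, hIH]
    ext v
    simp only [Set.mem_diff, Set.mem_insert_iff, Set.mem_image, Set.mem_union,
      Set.mem_setOf_eq, Set.mem_singleton_iff]
    constructor
    · rintro ⟨h1, hv0⟩
      rcases h1 with hv | ⟨x, ⟨hxA, hxB⟩, hxv⟩
      · refine ⟨Or.inr ?_, ?_⟩
        · rw [hv, hwldef]
          exact congrArg w (Fin.ext (by simp))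
        · rintro (h0 | ⟨t, ht2, htle, hveq⟩)
          · exact hv0 h0
          · rw [e2 t (by omega)] at hveq
            exact hkey2 t (hv.symm.trans hveq)
      · have hxveq : x = v + wl := by rw [← hxv]; abel
        refine ⟨?_, ?_⟩
        · rcases hxA with (⟨m, hxm⟩ | ⟨s, hs1, hxs⟩) | hx3
          · left; left
            exact ⟨m, by rw [← hxv, hxm, e2 1 (by omega)]; abel⟩
          · left; right
            have hlt : s.val < i + 1 := by have := s.isLt; omega
            refine ⟨⟨s.val, hlt⟩, ?_, ?_⟩
            · show s.val + 1 ≤ i + 1 - 1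
              omega
            · show v = w ⟨s.val, hlt⟩ - sR w (s.val + 2) (i + 1)
              rw [← hxv, hxs, e2 (s.val+2) (by omega), hww s ⟨s.val, hlt⟩ rfl]
              abel
          · left; right
            have hlt : i - 1 < i + 1 := by omega
            refine ⟨⟨i-1, hlt⟩, ?_, ?_⟩
            · show (i - 1) + 1 ≤ i + 1 - 1
              omega
            · show v = w ⟨i-1, hlt⟩ - sR w ((i-1) + 2) (i + 1)
              have hRR : sR w ((i-1)+2) (i+1) = wl := by
                rw [show (i-1)+2 = i+1 from by omega, e4]
              rw [hRR, ← hxv, hx3, hww ⟨i-1, by omega⟩ ⟨i-1, hlt⟩ rfl]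
        · rintro (h0 | ⟨t, ht2, htle, hveq⟩)
          · exact hv0 h0
          · by_cases hti : t ≤ i
            · apply hxB
              right
              exact ⟨t, ht2, hti, by rw [hxveq, hveq, e2 t (by omega)]; abel⟩
            · apply hxB
              left
              have hti' : t = i + 1 := by omega
              rw [hxveq, hveq, hti', e4]
              abel
    · rintro ⟨h1, h2⟩
      have hv0 : v ≠ 0 := fun h => h2 (Or.inl h)
      have hnot : ∀ t : ℕ, 2 ≤ t → t ≤ i + 1 → v ≠ -sR w t (i+1) :=
        fun t a b h => h2 (Or.inr ⟨t, a, b, h⟩)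
      refine ⟨?_, hv0⟩
      have hnotB : ∀ x : V, x - wl = v →
          ¬(x = 0 ∨ ∃ t : ℕ, 2 ≤ t ∧ t ≤ i ∧ x = -sR w' t i) := by
        intro x hxv
        rintro (hx0 | ⟨t, ht2, hti, hxe⟩)
        · apply hnot (i+1) (by omega) le_rfl
          rw [e4, ← hxv, hx0]
          abel
        · apply hnot t (by omega) (by omega)
          rw [e2 t (by omega), ← hxv, hxe]
          abel
      rcases h1 with (⟨m, hvm⟩ | ⟨s, hs1, hvs⟩) | hv3
      · right
        refine ⟨lam m - sR w' 1 i, ⟨Or.inl (Or.inl ⟨m, rfl⟩), ?_⟩, ?_⟩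
        · exact hnotB _ (by rw [hvm, e2 1 (by omega)]; abel)
        · rw [hvm, e2 1 (by omega)]; abel
      · by_cases hcase : s.val + 1 ≤ i - 1
        · right
          have hlt : s.val < i := by omega
          refine ⟨w' ⟨s.val, hlt⟩ - sR w' (s.val + 2) i,
            ⟨Or.inl (Or.inr ⟨⟨s.val, hlt⟩, by show s.val + 1 ≤ i - 1; omega, rfl⟩), ?_⟩, ?_⟩
          · apply hnotB
            rw [hvs, e2 (s.val+2) (by omega), hww ⟨s.val, by omega⟩ s rfl]
            abel
          · rw [hvs, e2 (s.val+2) (by omega), hww ⟨s.val, by omega⟩ s rfl]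
            abel
        · have hsv : s.val + 1 = i := by omega
          right
          refine ⟨w' ⟨i-1, by omega⟩, ⟨Or.inr rfl, ?_⟩, ?_⟩
          · apply hnotB
            rw [hvs, hww ⟨i-1, by omega⟩ s (by show i - 1 = (s : ℕ); omega)]
            have hidx : (s : ℕ) + 2 = i + 1 := by omega
            rw [hidx, e4]
          · rw [hvs, hww ⟨i-1, by omega⟩ s (by show i - 1 = (s : ℕ); omega)]
            have hidx : (s : ℕ) + 2 = i + 1 := by omega
            rw [hidx, e4]
      · left
        rw [hv3, hwldef]
        exact congrArg w (Fin.ext (by simp))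
end

section
/- Let n ≥ 1 and m ≥ 0 be integers. The set { i ∈ Λ⁺ : Σi = 0 and D(i) = m } is finite and has cardinality at most (n−1)^m. -/
/-- The lattice semigroup `Λ⁺ ⊆ ℤ^n`, generated by the elements `e_s − e_t` for `s < t`
together with `−e_1, …, −e_n`. -/
def Lam (n : ℕ) : AddSubmonoid (Fin n → ℤ) :=
  AddSubmonoid.closure
    ({x | ∃ s t : Fin n, s < t ∧ x = Pi.single s 1 - Pi.single t 1} ∪
      {x | ∃ j : Fin n, x = -Pi.single j 1})

/-- `Σi = i_1 + ⋯ + i_n`. -/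
def Sig {n : ℕ} (i : Fin n → ℤ) : ℤ := ∑ j, i j

/-- The defect `D(i) = n·i_1 + (n−1)·i_2 + ⋯ + 1·i_n`. -/
def Dfk {n : ℕ} (i : Fin n → ℤ) : ℤ := ∑ j : Fin n, ((n : ℤ) - j.val) * i j

/-- simple roots -/
def Aa (n : ℕ) (j : Fin (n-1)) : Fin n → ℤ :=
  Pi.single ⟨j.val, by omega⟩ 1 - Pi.single ⟨j.val + 1, by omega⟩ 1

lemma Aa_eq (n : ℕ) (j : Fin (n-1)) (a b : Fin n) (ha : a.val = j.val)
    (hb : b.val = j.val + 1) : Aa n j = Pi.single a 1 - Pi.single b 1 := by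
  funext x
  simp [Aa, Pi.single_apply, Fin.ext_iff, ha, hb]

lemma Sig_add {n : ℕ} (a b : Fin n → ℤ) : Sig (a + b) = Sig a + Sig b := by
  simp [Sig, Finset.sum_add_distrib]

lemma Dfk_add {n : ℕ} (a b : Fin n → ℤ) : Dfk (a + b) = Dfk a + Dfk b := by
  simp [Dfk, mul_add, Finset.sum_add_distrib]

lemma Dfk_sub {n : ℕ} (a b : Fin n → ℤ) : Dfk (a - b) = Dfk a - Dfk b := by
  simp [Dfk, mul_sub, Finset.sum_sub_distrib]

lemma Dfk_single {n : ℕ} (a : Fin n) : Dfk (Pi.single a 1 : Fin n → ℤ) = (n : ℤ) - a.val := by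
  simp [Dfk, Pi.single_apply, mul_ite, Finset.sum_ite_eq']

lemma Dfk_Aa (n : ℕ) (j : Fin (n-1)) : Dfk (Aa n j) = 1 := by
  rw [Aa, Dfk_sub, Dfk_single, Dfk_single]
  push_cast; ring

/-- e_s - e_t is a sum of simple roots -/
lemma single_sub_mem (n : ℕ) : ∀ k (s t : Fin n), t.val = s.val + k + 1 →
    (Pi.single s 1 - Pi.single t 1 : Fin n → ℤ) ∈
      AddSubmonoid.closure (Set.range (Aa n)) := by
  intro k
  induction k with
  | zero =>
    intro s t he
    have hs : s.val < n - 1 := by have := t.isLt; omega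
    rw [← Aa_eq n ⟨s.val, hs⟩ s t rfl (by simpa using he)]
    exact AddSubmonoid.subset_closure ⟨_, rfl⟩
  | succ k ih =>
    intro s t he
    have hs : s.val < n - 1 := by have := t.isLt; omega
    set s' : Fin n := ⟨s.val + 1, by omega⟩ with hs'
    have key : (Pi.single s 1 - Pi.single t 1 : Fin n → ℤ) =
        Aa n ⟨s.val, hs⟩ + (Pi.single s' 1 - Pi.single t 1) := by
      rw [Aa_eq n ⟨s.val, hs⟩ s s' rfl rfl]
      abel
    rw [key]
    exact add_mem (AddSubmonoid.subset_closure ⟨_, rfl⟩)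
      (ih s' t (show t.val = s.val + 1 + k + 1 by omega))

lemma lam_aux {n : ℕ} {x : Fin n → ℤ} (hx : x ∈ Lam n) :
    Sig x ≤ 0 ∧ (Sig x = 0 → x ∈ AddSubmonoid.closure (Set.range (Aa n))) := by
  induction hx using AddSubmonoid.closure_induction with
  | mem y hy =>
    rcases hy with ⟨s, t, hst, rfl⟩ | ⟨j, rfl⟩
    · have hsig : Sig (Pi.single s 1 - Pi.single t 1 : Fin n → ℤ) = 0 := by
        simp [Sig, Finset.sum_sub_distrib, Finset.sum_pi_single]
      refine ⟨le_of_eq hsig, fun _ => ?_⟩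
      exact single_sub_mem n (t.val - s.val - 1) s t (by have := hst; omega)
    · have hsig : Sig (-Pi.single j 1 : Fin n → ℤ) = -1 := by
        simp [Sig, Finset.sum_pi_single]
      rw [hsig]; exact ⟨by norm_num, by norm_num⟩
  | zero => exact ⟨le_of_eq (by simp [Sig]), fun _ => zero_mem _⟩
  | add a b _ _ ha hb =>
    have h1 := ha.1; have h2 := hb.1
    refine ⟨by rw [Sig_add]; omega, fun h => ?_⟩
    rw [Sig_add] at h
    exact add_mem (ha.2 (by omega)) (hb.2 (by omega))

/-- **Lemma 5.6 (1)**: the set `{i ∈ Λ⁺ : Σi = 0, D(i) = m}` is finite of cardinality at most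
`(n−1)^m`. -/
theorem card_lattice_points_with_defect (n : ℕ) (hn : 1 ≤ n) (m : ℕ) :
    {i : Fin n → ℤ | i ∈ Lam n ∧ Sig i = 0 ∧ Dfk i = m}.Finite ∧
      Nat.card {i : Fin n → ℤ | i ∈ Lam n ∧ Sig i = 0 ∧ Dfk i = m} ≤ (n - 1) ^ m := by
  set F : (Fin m → Fin (n-1)) → (Fin n → ℤ) := fun c => ∑ k, Aa n (c k) with hF
  have hsub : {i : Fin n → ℤ | i ∈ Lam n ∧ Sig i = 0 ∧ Dfk i = m} ⊆ Set.range F := by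
    rintro x ⟨hx, hs, hd⟩
    obtain ⟨L, hL, hsum⟩ :=
      AddSubmonoid.exists_list_of_mem_closure ((lam_aux hx).2 hs)
    obtain ⟨J, rfl⟩ : ∃ J : List (Fin (n-1)), J.map (Aa n) = L := by
      clear hsum
      induction L with
      | nil => exact ⟨[], rfl⟩
      | cons y L ihL =>
        obtain ⟨j, hj⟩ := hL y (by simp)
        obtain ⟨J, hJ⟩ := ihL (fun z hz => hL z (by simp [hz]))
        exact ⟨j :: J, by simp [hJ, ← hj]⟩
    have hdl : Dfk x = (J.length : ℤ) := by
      rw [← hsum]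
      clear hsum hd
      induction J with
      | nil => simp [Dfk]
      | cons j J ihJ =>
        simp only [List.map_cons, List.sum_cons, List.length_cons]
        rw [Dfk_add, Dfk_Aa, ihJ (fun z hz => hL z (by simp at hz ⊢; tauto))]
        push_cast; ring
    have hlen : J.length = m := by
      have := hd.symm.trans hdl
      exact_mod_cast this.symm
    refine ⟨fun k => J[(Fin.cast hlen.symm k).1], ?_⟩
    show ∑ k : Fin m, Aa n (J[(Fin.cast hlen.symm k).1]) = x
    exact (Fin.sum_congr' (fun i : Fin J.length => Aa n (J[i.1])) hlen.symm).trans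
      (by rw [Fin.sum_univ_fun_getElem]; exact hsum)
  have hfin : (Set.range F).Finite := Set.finite_range F
  refine ⟨hfin.subset hsub, ?_⟩
  calc Nat.card {i : Fin n → ℤ | i ∈ Lam n ∧ Sig i = 0 ∧ Dfk i = m}
      ≤ Nat.card (Set.range F) := Nat.card_mono hfin hsub
    _ ≤ Nat.card (Fin m → Fin (n-1)) :=
        Nat.card_le_card_of_surjective (Set.rangeFactorization F)
          Set.rangeFactorization_surjective
    _ = (n - 1) ^ m := by simp [Nat.card_eq_fintype_card]
end

section
/- Let n ≥ 1 and s ≥ 1 be integers and let i ∈ Λ⁺ satisfy Σi = 0. Then the set { (i_1, …, i_s) ∈ (Λ⁺)^s : i_1 + ⋯ + i_s = i } is finite and has cardinality at most s^{D(i)}. -/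
/-- Partial sums `P_k(x) = x_1 + ⋯ + x_{k+1}`. -/
def psum {n : ℕ} (x : Fin n → ℤ) (k : Fin n) : ℤ := ∑ j ∈ Finset.Iic k, x j

lemma lam_bounds {n : ℕ} {x : Fin n → ℤ} (hx : x ∈ Lam n) :
    Sig x ≤ 0 ∧ ∀ k, Sig x ≤ psum x k := by
  induction hx using AddSubmonoid.closure_induction with
  | mem x h =>
    rcases h with ⟨a, b, hab, rfl⟩ | ⟨j, rfl⟩
    · constructor
      · simp [Sig, Finset.sum_sub_distrib, Pi.single_apply]
      · intro k
        simp only [Sig, psum, Pi.sub_apply, Finset.sum_sub_distrib, Pi.single_apply,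
          Finset.sum_ite_eq', Finset.mem_univ, Finset.mem_Iic, if_true]
        have : b ≤ k → a ≤ k := fun h => (hab.le.trans h)
        split_ifs <;> simp_all
    · constructor
      · simp [Sig, Pi.single_apply]
      · intro k
        simp only [Sig, psum, Pi.neg_apply, Finset.sum_neg_distrib, Pi.single_apply,
          Finset.sum_ite_eq', Finset.mem_univ, Finset.mem_Iic, if_true]
        split_ifs <;> simp
  | zero => simp [Sig, psum]
  | add x y hx hy ihx ihy =>
    refine ⟨?_, fun k => ?_⟩
    · have := ihx.1; have := ihy.1
      simp only [Sig, Pi.add_apply, Finset.sum_add_distrib] at *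
      omega
    · have h1 := ihx.2 k; have h2 := ihy.2 k
      have := ihx.1; have := ihy.1
      simp only [Sig, psum, Pi.add_apply, Finset.sum_add_distrib] at *
      omega

lemma psum_inj {n : ℕ} {x y : Fin n → ℤ} (h : ∀ k, psum x k = psum y k) : x = y := by
  have key : ∀ m : ℕ, ∀ hm : m < n, x ⟨m, hm⟩ = y ⟨m, hm⟩ := by
    intro m
    induction m using Nat.strong_induction_on with
    | _ m ih =>
      intro hm
      have hj := h ⟨m, hm⟩
      simp only [psum] at hj
      rw [← Finset.Iio_insert, Finset.sum_insert (by simp), Finset.sum_insert (by simp)] at hj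
      have : ∑ l ∈ Finset.Iio (⟨m, hm⟩ : Fin n), x l = ∑ l ∈ Finset.Iio (⟨m, hm⟩ : Fin n), y l := by
        refine Finset.sum_congr rfl fun l hl => ?_
        have hl0 : l < (⟨m, hm⟩ : Fin n) := Finset.mem_Iio.mp hl
        have hl' : l.val < m := hl0
        have := ih l.val hl' l.isLt
        simpa using this
      omega
  funext j
  have := key j.val j.isLt
  simpa using this

lemma atd_card_le (s : ℕ) (hs : 1 ≤ s) (C : ℕ) :
    (Finset.Nat.antidiagonalTuple s C).card ≤ s ^ C := by
  classical
  induction C with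
  | zero => simp [Finset.Nat.antidiagonalTuple_zero_right]
  | succ C ih =>
    have key : (Finset.Nat.antidiagonalTuple s (C+1)).card ≤
        ((Finset.univ : Finset (Fin s)) ×ˢ Finset.Nat.antidiagonalTuple s C).card := by
      have hex : ∀ x : Fin s → ℕ, x ∈ Finset.Nat.antidiagonalTuple s (C+1) → ∃ j, x j ≠ 0 := by
        intro x hx
        rw [Finset.Nat.mem_antidiagonalTuple] at hx
        by_contra hc
        push_neg at hc
        simp [hc] at hx
      set f : (Fin s → ℕ) → Fin s × (Fin s → ℕ) := fun x =>
        if h : ∃ j, x j ≠ 0 then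
          (h.choose, fun l => if l = h.choose then x h.choose - 1 else x l)
        else (⟨0, hs⟩, x) with hf
      apply Finset.card_le_card_of_injOn f
      · intro x hx
        have hex' := hex x hx
        rw [Finset.mem_coe, Finset.Nat.mem_antidiagonalTuple] at hx
        simp only [hf, dif_pos hex', Finset.mem_coe, Finset.mem_product, Finset.mem_univ, true_and,
          Finset.Nat.mem_antidiagonalTuple]
        have hj : x hex'.choose ≠ 0 := hex'.choose_spec
        rw [Finset.sum_eq_sum_sdiff_singleton_add (Finset.mem_univ hex'.choose) x] at hx
        rw [Finset.sum_eq_sum_sdiff_singleton_add (Finset.mem_univ hex'.choose)]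
        have : ∑ l ∈ Finset.univ \ {hex'.choose}, (if l = hex'.choose then x hex'.choose - 1 else x l)
            = ∑ l ∈ Finset.univ \ {hex'.choose}, x l := by
          refine Finset.sum_congr rfl fun l hl => ?_
          rw [if_neg (by simpa using (Finset.mem_sdiff.mp hl).2)]
        rw [this, if_pos rfl]
        omega
      · intro x hx y hy hxy
        simp only [Finset.mem_coe] at hx hy
        have hex1 := hex x hx
        have hex2 := hex y hy
        simp only [hf, dif_pos hex1, dif_pos hex2, Prod.mk.injEq] at hxy
        obtain ⟨h1, h2⟩ := hxy
        have hx1 : x hex1.choose ≠ 0 := hex1.choose_spec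
        have hy1 : y hex2.choose ≠ 0 := hex2.choose_spec
        funext l
        have hl2 := congrFun h2 l
        by_cases hl : l = hex1.choose
        · subst hl
          rw [if_pos rfl, if_pos h1, ← h1] at hl2
          rw [← h1] at hy1
          omega
        · rwa [if_neg hl, if_neg (fun hc => hl (hc.trans h1.symm))] at hl2
    calc (Finset.Nat.antidiagonalTuple s (C+1)).card
        ≤ _ := key
      _ = s * (Finset.Nat.antidiagonalTuple s C).card := by
          simp [Finset.card_product, mul_comm]
      _ ≤ s * s ^ C := Nat.mul_le_mul_left s ih
      _ = s ^ (C+1) := by ring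

lemma dfk_eq_sum_psum {n : ℕ} (i : Fin n → ℤ) : Dfk i = ∑ k : Fin n, psum i k := by
  unfold Dfk psum
  rw [Finset.sum_comm' (t' := Finset.univ) (s' := fun j => Finset.Ici j)
    (fun k j => by simp [and_comm])]
  refine Finset.sum_congr rfl fun j _ => ?_
  rw [Finset.sum_const, Fin.card_Ici, nsmul_eq_mul]
  congr 1
  have := j.isLt
  push_cast [Nat.cast_sub this.le]
  ring

/-- **Lemma 5.6 (2)**: for `i ∈ Λ⁺` with `Σi = 0`, the set of `s`-tuples
`(i_1, …, i_s) ∈ (Λ⁺)^s` with `i_1 + ⋯ + i_s = i` is finite of cardinality at most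
`s^{D(i)}`. -/
theorem card_decompositions_le (n : ℕ) (hn : 1 ≤ n) (s : ℕ) (hs : 1 ≤ s)
    (i : Fin n → ℤ) (hi : i ∈ Lam n) (h0 : Sig i = 0) :
    {v : Fin s → (Fin n → ℤ) | (∀ j, v j ∈ Lam n) ∧ ∑ j, v j = i}.Finite ∧
      (Nat.card {v : Fin s → (Fin n → ℤ) | (∀ j, v j ∈ Lam n) ∧ ∑ j, v j = i} : ℚ)
        ≤ (s : ℚ) ^ Dfk i := by
  classical
  set V := {v : Fin s → (Fin n → ℤ) | (∀ j, v j ∈ Lam n) ∧ ∑ j, v j = i} with hV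
  have hpnn : ∀ k, 0 ≤ psum i k := fun k => by
    have := (lam_bounds hi).2 k; omega
  set C : Fin n → ℕ := fun k => (psum i k).toNat with hCdef
  have hCval : ∀ k, (C k : ℤ) = psum i k := fun k => Int.toNat_of_nonneg (hpnn k)
  set A : Finset (Fin n → Fin s → ℕ) :=
    Fintype.piFinset fun k => Finset.Nat.antidiagonalTuple s (C k) with hA
  set Φ : (Fin s → (Fin n → ℤ)) → (Fin n → Fin s → ℕ) :=
    fun v k j => (psum (v j) k).toNat with hPhi
  -- each component has Sig = 0
  have hsig : ∀ v ∈ V, ∀ j, Sig (v j) = 0 := by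
    intro v hv j
    have hsum : ∑ j', Sig (v j') = 0 := by
      have := hv.2
      calc ∑ j', Sig (v j') = Sig (∑ j', v j') := by
            simp only [Sig, Finset.sum_apply]; rw [Finset.sum_comm]
        _ = 0 := by rw [this, h0]
    exact (Finset.sum_eq_zero_iff_of_nonpos
      (fun j' _ => (lam_bounds (hv.1 j')).1)).mp hsum j (Finset.mem_univ j)
  have hnn : ∀ v ∈ V, ∀ j k, 0 ≤ psum (v j) k := by
    intro v hv j k
    have := (lam_bounds (hv.1 j)).2 k
    rw [hsig v hv j] at this
    exact this
  have hsumps : ∀ v ∈ V, ∀ k, ∑ j, psum (v j) k = psum i k := by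
    intro v hv k
    rw [← hv.2]
    simp only [psum, Finset.sum_apply]
    rw [Finset.sum_comm]
  -- Φ maps V into A
  have hmaps : ∀ v ∈ V, Φ v ∈ A := by
    intro v hv
    rw [hA, Fintype.mem_piFinset]
    intro k
    rw [Finset.Nat.mem_antidiagonalTuple]
    have : ((∑ j, (psum (v j) k).toNat : ℕ) : ℤ) = ((C k : ℕ) : ℤ) := by
      rw [hCval k, ← hsumps v hv k]
      push_cast
      exact Finset.sum_congr rfl fun j _ => Int.toNat_of_nonneg (hnn v hv j k)
    exact_mod_cast this
  -- Φ is injective on V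
  have hinj : Set.InjOn Φ V := by
    intro v hv w hw hvw
    funext j
    apply psum_inj
    intro k
    have h1 := congrFun (congrFun hvw k) j
    simp only [hPhi] at h1
    have := hnn v hv j k
    have := hnn w hw j k
    omega
  -- finiteness
  have himg : Φ '' V ⊆ ↑A := by rintro _ ⟨v, hv, rfl⟩; exact hmaps v hv
  have hfin : V.Finite := Set.Finite.of_finite_image (A.finite_toSet.subset himg) hinj
  refine ⟨hfin, ?_⟩
  -- cardinality bound as naturals
  have hcard : Nat.card V ≤ s ^ (∑ k, C k) := by
    have h1 : Nat.card V = V.ncard := Nat.card_coe_set_eq V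
    have h2 : V.ncard = (Φ '' V).ncard := (Set.ncard_image_of_injOn hinj).symm
    have h3 : (Φ '' V).ncard ≤ (A : Set (Fin n → Fin s → ℕ)).ncard :=
      Set.ncard_le_ncard himg A.finite_toSet
    have h4 : (A : Set (Fin n → Fin s → ℕ)).ncard = A.card := Set.ncard_coe_finset A
    have h5 : A.card ≤ s ^ (∑ k, C k) := by
      rw [hA, Fintype.card_piFinset, ← Finset.prod_pow_eq_pow_sum]
      exact Finset.prod_le_prod' fun k _ => atd_card_le s hs (C k)
    omega
  -- convert to ℚ with the zpow exponent
  have hD : Dfk i = ((∑ k, C k : ℕ) : ℤ) := by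
    rw [dfk_eq_sum_psum]
    push_cast
    exact (Finset.sum_congr rfl fun k _ => (hCval k)).symm
  rw [hD, zpow_natCast]
  calc (Nat.card V : ℚ) ≤ ((s ^ (∑ k, C k) : ℕ) : ℚ) := by exact_mod_cast hcard
    _ = (s : ℚ) ^ (∑ k, C k) := by push_cast; ring
end

section
/- For every i ∈ ℤ^n, the coefficient of z^i in A is a polynomial in d and h in which every monomial d^j h^m occurring with nonzero coefficient satisfies j ≤ m; moreover this coefficient of z^i is zero whenever i ∉ Λ⁺. In particular, for every m ≥ 0 the coefficient of z^i d^m h^m in A vanishes unless i ∈ Λ⁺. -/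
noncomputable section
open scoped Classical

/-- Priority bump to avoid a stuck typeclass search. -/
instance (priority := 10000) (n : ℕ) : WellFoundedLT (Fin n) := inferInstance

/-- The base field `F = ℚ(d,h)`, realized as the fraction field of `ℚ[d,h]`. -/
abbrev Fdh : Type := FractionRing (MvPolynomial (Fin 2) ℚ)

/-- The indeterminate `d`. -/
def dvar : Fdh := algebraMap (MvPolynomial (Fin 2) ℚ) Fdh (MvPolynomial.X 0)

/-- The indeterminate `h`. -/
def hvar : Fdh := algebraMap (MvPolynomial (Fin 2) ℚ) Fdh (MvPolynomial.X 1)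

/-- Value group for the iterated Laurent series field: `ℤ^n` ordered lexicographically,
with the exponent of `z_n` most significant. -/
abbrev Gam (n : ℕ) : Type := Lex (Fin n → ℤ)

/-- The iterated Laurent series field `K_F = F((z_n^{-1}))((z_{n-1}^{-1}))⋯((z_2^{-1}))((z_1))`,
realized as a Hahn series field; supports are well-ordered with respect to the monomial order
corresponding to the region `1 ≪ |z_1| ≪ ⋯ ≪ |z_n|`. -/
abbrev KK (n : ℕ) : Type := HahnSeries (Gam n) Fdh

/-- The Hahn exponent attached to a z-monomial exponent vector `i` (exponent `i j` on `z_{j+1}`);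
larger monomials get smaller Hahn exponents, and `z_n` dominates. -/
def gamOf {n : ℕ} (i : Fin n → ℤ) : Gam n := toLex fun k => -(i k.rev)

/-- The variable `z_{j+1}` as an element of `K_F`. -/
def zv {n : ℕ} (j : Fin n) : KK n := HahnSeries.single (gamOf (Pi.single j 1)) 1

/-- The coefficient of `z^i = z_1^{i 0} ⋯ z_n^{i (n-1)}` of an iterated Laurent series. -/
def zcoeff {n : ℕ} (i : Fin n → ℤ) (x : KK n) : Fdh := x.coeff (gamOf i)

/-- `z_{[s..t]} = z_s + ⋯ + z_t` (1-based indices; `0` when `s > t`). -/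
def zS (n : ℕ) (s t : ℕ) : KK n :=
  ∑ j ∈ Finset.univ.filter (fun j : Fin n => s ≤ j.val + 1 ∧ j.val + 1 ≤ t), zv j

/-- `A⁰ = ∏_{j=1}^n (z_{[1..j]} + d·h)/z_j`. -/
def A0 (n : ℕ) : KK n :=
  ∏ j : Fin n, (zS n 1 (j.val + 1) + HahnSeries.C (dvar * hvar)) / zv j

/-- `A¹ = ∏_{1 ≤ t₁ < t₂ ≤ n} z_{[t₁..t₂]} / (z_{[t₁+1..t₂]} − z_{t₁})`. -/
def A1 (n : ℕ) : KK n :=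
  ∏ p ∈ Finset.univ.filter (fun p : Fin n × Fin n => p.1 < p.2),
    zS n (p.1.val + 1) (p.2.val + 1) / (zS n (p.1.val + 2) (p.2.val + 1) - zv p.1)

/-- `A² = ∏_{j=1}^n ( z_j/(z_{[1..j]} + h) )^{n+2}`. -/
def A2 (n : ℕ) : KK n :=
  ∏ j : Fin n, (zv j / (zS n 1 (j.val + 1) + HahnSeries.C hvar)) ^ (n + 2)

/-- `A = A⁰ · A¹ · A²`. -/
def AA (n : ℕ) : KK n := A0 n * A1 n * A2 n

/-- The coefficient of `d^j h^m` of an element of `F = ℚ(d,h)` which is a polynomial in `d, h`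
(and `0` if it is not a polynomial).  This is well defined since the algebra map from
`ℚ[d,h]` to its fraction field is injective. -/
def fCoeff (x : Fdh) (j m : ℕ) : ℚ :=
  if hq : ∃ q : MvPolynomial (Fin 2) ℚ, algebraMap (MvPolynomial (Fin 2) ℚ) Fdh q = x
  then MvPolynomial.coeff (Finsupp.single 0 j + Finsupp.single 1 m) hq.choose
  else 0

/-- `A_{z^i d^j h^m}`: the coefficient of `z^i d^j h^m` in `A`. -/
def Acf (n : ℕ) (i : Fin n → ℤ) (j m : ℕ) : ℚ := fCoeff (zcoeff i (AA n)) j m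

/-- `|a| = a_1 + ⋯ + a_n`. -/
def absA {n : ℕ} (a : Fin n → ℚ) : ℚ := ∑ j, a j

/-- `S_{n,δ} = 2 − 2n² + n²(n+2)δ`. -/
def Snd (n : ℕ) (δ : ℚ) : ℚ := 2 - 2 * n ^ 2 + n ^ 2 * (n + 2) * δ

/-- A rational constant, as an element of `K_F`. -/
def cQ {n : ℕ} (q : ℚ) : KK n := HahnSeries.C (q : Fdh)

/-- The numerator `N = (a_1z_1+⋯+a_nz_n+2|a|h)^{n²−1}·(a_1z_1+⋯+a_nz_n+S_{n,δ}|a|h−n²δ|a|dh)`. -/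
def Nnum (n : ℕ) (a : Fin n → ℚ) (δ : ℚ) : KK n :=
  (∑ j, cQ (a j) * zv j + cQ (2 * absA a) * HahnSeries.C hvar) ^ (n ^ 2 - 1) *
    (∑ j, cQ (a j) * zv j + cQ (Snd n δ * absA a) * HahnSeries.C hvar
      - cQ ((n : ℚ) ^ 2 * δ * absA a) * HahnSeries.C (dvar * hvar))

/-- `B = N/(z_1⋯z_n)^n`. -/
def BB (n : ℕ) (a : Fin n → ℚ) (δ : ℚ) : KK n := Nnum n a δ / (∏ j : Fin n, zv j) ^ n

/-- The special choice `a_i = n^{8(n+1−i)}`, `i = 1, …, n`. -/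
def astd (n : ℕ) : Fin n → ℚ := fun t => (n : ℚ) ^ (8 * (n - t.val))

/-- The special choice `δ = 1/(2·n^{8n})`. -/
def δstd (n : ℕ) : ℚ := 1 / (2 * (n : ℚ) ^ (8 * n))

namespace L55
open Finset

/-- Polynomials in `d,h` where every monomial `d^j h^m` has `j ≤ m`. -/
def Spoly : Subring (MvPolynomial (Fin 2) ℚ) where
  carrier := {q | ∀ m : Fin 2 →₀ ℕ, MvPolynomial.coeff m q ≠ 0 → m 0 ≤ m 1}
  zero_mem' := by intro m hm; simp at hm
  one_mem' := by
    intro m hm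
    rw [MvPolynomial.coeff_one] at hm
    split_ifs at hm with h
    · simp [← h]
    · exact absurd rfl hm
  add_mem' := by
    intro a b ha hb m hm
    rw [MvPolynomial.coeff_add] at hm
    by_cases h : MvPolynomial.coeff m a = 0
    · exact hb m (by simpa [h] using hm)
    · exact ha m h
  neg_mem' := by
    intro a ha m hm
    rw [MvPolynomial.coeff_neg] at hm
    exact ha m (by simpa using hm)
  mul_mem' := by
    intro a b ha hb m hm
    rw [MvPolynomial.coeff_mul] at hm
    obtain ⟨x, hx, hne⟩ := Finset.exists_ne_zero_of_sum_ne_zero hm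
    rw [Finset.HasAntidiagonal.mem_antidiagonal] at hx
    have h1 := ha x.1 (left_ne_zero_of_mul hne)
    have h2 := hb x.2 (right_ne_zero_of_mul hne)
    have : m = x.1 + x.2 := hx.symm
    rw [this]
    simpa using add_le_add h1 h2

/-- Image in `F = ℚ(d,h)`. -/
def SF : Subring Fdh := Spoly.map (algebraMap (MvPolynomial (Fin 2) ℚ) Fdh)

theorem dh_mem_SF : dvar * hvar ∈ SF := by
  refine ⟨MvPolynomial.X 0 * MvPolynomial.X 1, ?_, by simp [dvar, hvar]⟩
  intro m hm
  rw [MvPolynomial.coeff_mul] at hm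
  obtain ⟨x, hx, hne⟩ := Finset.exists_ne_zero_of_sum_ne_zero hm
  rw [Finset.HasAntidiagonal.mem_antidiagonal] at hx
  have h1 := left_ne_zero_of_mul hne
  have h2 := right_ne_zero_of_mul hne
  rw [MvPolynomial.coeff_X'] at h1 h2
  have e1 : x.1 = Finsupp.single 0 1 := by by_contra h; exact h1 (if_neg (fun hh => h hh.symm))
  have e2 : x.2 = Finsupp.single 1 1 := by by_contra h; exact h2 (if_neg (fun hh => h hh.symm))
  subst hx
  simp [e1, e2]

theorem h_mem_SF : hvar ∈ SF := by
  refine ⟨MvPolynomial.X 1, ?_, rfl⟩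
  intro m hm
  rw [MvPolynomial.coeff_X'] at hm
  have e : m = Finsupp.single 1 1 := by by_contra h; exact hm (if_neg (fun hh => h hh.symm))
  simp [e]


theorem gamOf_add {n : ℕ} (i i' : Fin n → ℤ) : gamOf (i + i') = gamOf i + gamOf i' := by
  show toLex _ = toLex _
  apply congrArg
  funext k
  show -(i k.rev + i' k.rev) = -(i k.rev) + -(i' k.rev)
  ring

theorem gamOf_zero {n : ℕ} : gamOf (0 : Fin n → ℤ) = 0 := by
  show toLex _ = toLex _
  apply congrArg
  funext k
  show -(0 : ℤ) = 0
  ring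

theorem gamOf_injective {n : ℕ} : Function.Injective (gamOf (n := n)) := by
  intro i i' h
  funext j
  have := congrArg (fun γ : Gam n => ofLex γ j.rev) h
  simp only [gamOf, ofLex_toLex, Fin.rev_rev] at this
  omega

theorem suff_le_of_mem_Lam {n : ℕ} {i : Fin n → ℤ} (h : i ∈ Lam n) (k : Fin n) :
    (∑ j ∈ univ.filter (fun j => k ≤ j), i j) ≤ 0 := by
  induction h using AddSubmonoid.closure_induction with
  | mem x hx =>
    rcases hx with ⟨s, t, hst, rfl⟩ | ⟨j, rfl⟩
    · simp only [Pi.sub_apply, Finset.sum_sub_distrib, Pi.single_apply]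
      rw [Finset.sum_ite_eq' _ s (fun _ => (1:ℤ)), Finset.sum_ite_eq' _ t (fun _ => (1:ℤ))]
      simp only [Finset.mem_filter, Finset.mem_univ, true_and]
      split_ifs with h1 h2 h2
      · omega
      · exact absurd (le_trans h1 hst.le) h2
      · omega
      · omega
    · simp only [Pi.neg_apply, Finset.sum_neg_distrib, Pi.single_apply]
      rw [Finset.sum_ite_eq' _ j (fun _ => (1:ℤ))]
      split_ifs <;> omega
  | zero => simp
  | add x y hx hy ihx ihy =>
    have : ∑ j ∈ univ.filter (fun j => k ≤ j), (x + y) j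
        = (∑ j ∈ univ.filter (fun j => k ≤ j), x j) + ∑ j ∈ univ.filter (fun j => k ≤ j), y j := by
      rw [← Finset.sum_add_distrib]; rfl
    omega

theorem gamOf_pos {n : ℕ} {i : Fin n → ℤ} (h : i ∈ Lam n) (h0 : i ≠ 0) : 0 < gamOf i := by
  have hne : (univ.filter (fun j => i j ≠ 0)).Nonempty := by
    by_contra hc
    rw [Finset.not_nonempty_iff_eq_empty, Finset.filter_eq_empty_iff] at hc
    exact h0 (funext fun j => by simpa using hc (mem_univ j))
  set t := (univ.filter (fun j => i j ≠ 0)).max' hne with ht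
  have htmem : i t ≠ 0 := by
    have := (univ.filter (fun j : Fin n => i j ≠ 0)).max'_mem hne
    simpa using this
  have hzero : ∀ j, t < j → i j = 0 := by
    intro j hj
    by_contra hc
    have : j ≤ t := Finset.le_max' _ j (by simpa using hc)
    omega
  have hsum : (∑ j ∈ univ.filter (fun j => t ≤ j), i j) = i t := by
    rw [Finset.sum_eq_single t]
    · intro j hj hjt
      simp only [Finset.mem_filter, Finset.mem_univ, true_and] at hj
      exact hzero j (lt_of_le_of_ne hj (fun hh => hjt hh.symm))
    · intro hj
      exact absurd (by simp : t ∈ univ.filter (fun j => t ≤ j)) hj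
  have hneg : i t < 0 := by
    have := suff_le_of_mem_Lam h t
    rw [hsum] at this
    omega
  refine ⟨t.rev, ?_, ?_⟩
  · intro j hj
    have : t < j.rev := by
      have := Fin.rev_lt_rev.mpr hj
      simpa [Fin.rev_rev] using this
    show (0 : ℤ) = -(i j.rev)
    rw [hzero j.rev this]; ring
  · show (0 : ℤ) < -(i t.rev.rev)
    rw [Fin.rev_rev]
    omega

theorem one_coeff {n : ℕ} (γ : Gam n) : (1 : KK n).coeff γ = if γ = 0 then 1 else 0 := by
  by_cases h : γ = 0
  · rw [if_pos h, h]; exact HahnSeries.coeff_single_same 0 1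
  · rw [if_neg h]; exact HahnSeries.coeff_single_of_ne h

theorem single_coeff' {n : ℕ} (a b : Gam n) (r : Fdh) :
    (HahnSeries.single a r : KK n).coeff b = if b = a then r else 0 := by
  by_cases h : b = a
  · rw [if_pos h, h]; exact HahnSeries.coeff_single_same a r
  · rw [if_neg h]; exact HahnSeries.coeff_single_of_ne h

theorem coeff_sum {n : ℕ} {α : Type*} (s : Finset α) (f : α → KK n) (g : Gam n) :
    (∑ a ∈ s, f a).coeff g = ∑ a ∈ s, (f a).coeff g := by
  classical
  induction s using Finset.induction_on with
  | empty => simp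
  | insert a s hx ih => rw [Finset.sum_insert hx, Finset.sum_insert hx, HahnSeries.coeff_add, ih]

/-- The subring of `K_F` of series with coefficients in `SF` supported on `Λ⁺`. -/
def RR (n : ℕ) : Subring (KK n) where
  carrier := {x | ∀ γ : Gam n, x.coeff γ ∈ SF ∧ (x.coeff γ ≠ 0 → ∃ i ∈ Lam n, γ = gamOf i)}
  zero_mem' := by intro γ; exact ⟨by rw [HahnSeries.coeff_zero]; exact zero_mem _, by simp⟩
  one_mem' := by
    intro γ
    have h1 : (1 : KK n).coeff γ = if γ = 0 then 1 else 0 := one_coeff γ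
    constructor
    · rw [h1]; split_ifs <;> [exact one_mem _; exact zero_mem _]
    · intro hne
      refine ⟨0, zero_mem _, ?_⟩
      rw [h1] at hne
      split_ifs at hne with hh
      · rw [hh, gamOf_zero]
      · exact absurd rfl hne
  add_mem' := by
    intro a b ha hb γ
    rw [HahnSeries.coeff_add]
    refine ⟨add_mem (ha γ).1 (hb γ).1, ?_⟩
    intro hne
    by_cases h : a.coeff γ = 0
    · exact (hb γ).2 (by intro hh; rw [h, hh] at hne; simp at hne)
    · exact (ha γ).2 h
  neg_mem' := by
    intro a ha γ
    rw [HahnSeries.coeff_neg]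
    exact ⟨neg_mem (ha γ).1, fun hne => (ha γ).2 (by simpa using hne)⟩
  mul_mem' := by
    intro a b ha hb γ
    rw [HahnSeries.coeff_mul]
    constructor
    · exact sum_mem (fun ij _ => mul_mem (ha ij.1).1 (hb ij.2).1)
    · intro hne
      obtain ⟨ij, hij, hne2⟩ := Finset.exists_ne_zero_of_sum_ne_zero hne
      replace hij := Finset.mem_addAntidiagonal.1 hij
      obtain ⟨i1, hi1, e1⟩ := (ha ij.1).2 (left_ne_zero_of_mul hne2)
      obtain ⟨i2, hi2, e2⟩ := (hb ij.2).2 (right_ne_zero_of_mul hne2)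
      exact ⟨i1 + i2, add_mem hi1 hi2, by rw [gamOf_add, ← e1, ← e2, hij.2.2]⟩

theorem single_mem_RR {n : ℕ} {i : Fin n → ℤ} (hi : i ∈ Lam n) {c : Fdh} (hc : c ∈ SF) :
    HahnSeries.single (gamOf i) c ∈ RR n := by
  intro γ
  have h1 : (HahnSeries.single (gamOf i) c : KK n).coeff γ = if γ = gamOf i then c else 0 :=
    single_coeff' _ _ _
  rw [h1]
  constructor
  · split_ifs <;> [exact hc; exact zero_mem _]
  · intro hne
    split_ifs at hne with hh
    · exact ⟨i, hi, hh⟩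
    · exact absurd rfl hne

theorem inv_mem_RR {n : ℕ} {x : KK n} (hx : x ∈ RR n) (h0 : x.coeff 0 = 1) : x⁻¹ ∈ RR n := by
  have hx0 : x ≠ 0 := fun h => by rw [h] at h0; simp at h0
  set v := x⁻¹ with hv
  have hxv : x * v = 1 := mul_inv_cancel₀ hx0
  have hu : x - 1 ∈ RR n := sub_mem hx (one_mem _)
  have hu0 : (x - 1).coeff 0 = 0 := by
    rw [HahnSeries.coeff_sub, h0]
    have : (1 : KK n).coeff 0 = 1 := HahnSeries.coeff_single_same 0 1
    rw [this]; ring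
  have hrec : v = 1 - (x - 1) * v := by linear_combination hxv
  -- minimal counterexample
  set T : Set (Gam n) := {γ ∈ v.support | ¬ (v.coeff γ ∈ SF ∧ (v.coeff γ ≠ 0 → ∃ i ∈ Lam n, γ = gamOf i))} with hT
  have hTwf : T.IsWF := v.isWF_support.mono (fun γ hγ => hγ.1)
  have hTe : T = ∅ := by
    by_contra hne
    have hTne : T.Nonempty := Set.nonempty_iff_ne_empty.mpr hne
    set γ₀ := hTwf.min hTne with hγ₀
    have hγ₀T : γ₀ ∈ T := hTwf.min_mem hTne
    have hgood : ∀ β ∈ v.support, β < γ₀ →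
        v.coeff β ∈ SF ∧ (v.coeff β ≠ 0 → ∃ i ∈ Lam n, β = gamOf i) := by
      intro β hβ hlt
      by_contra hc
      exact absurd hlt (hTwf.not_lt_min hTne ⟨hβ, hc⟩)
    have hkey : v.coeff γ₀ = (1 : KK n).coeff γ₀ - ((x-1) * v).coeff γ₀ := by
      conv_lhs => rw [hrec]
      rw [HahnSeries.coeff_sub]
    have hterm : ∀ ij ∈ Finset.addAntidiagonal (x-1).isPWO_support v.isPWO_support γ₀,
        ((x-1).coeff ij.1 * v.coeff ij.2 ∈ SF) ∧
        ((x-1).coeff ij.1 * v.coeff ij.2 ≠ 0 → ∃ i ∈ Lam n, γ₀ = gamOf i) := by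
      intro ij hij
      replace hij := Finset.mem_addAntidiagonal.1 hij
      obtain ⟨h1, h2, h3⟩ := hij
      have hne1 : (x-1).coeff ij.1 ≠ 0 := h1
      have hne2 : v.coeff ij.2 ≠ 0 := h2
      obtain ⟨i1, hi1, e1⟩ := (hu ij.1).2 hne1
      have hi1ne : i1 ≠ 0 := by
        intro hh
        rw [hh, gamOf_zero] at e1
        rw [e1] at hne1
        exact hne1 hu0
      have hpos : 0 < ij.1 := by rw [e1]; exact gamOf_pos hi1 hi1ne
      have hlt : ij.2 < γ₀ := by
        rw [← h3]; exact lt_add_of_pos_left ij.2 hpos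
      obtain ⟨hS2, hL2⟩ := hgood ij.2 h2 hlt
      refine ⟨mul_mem ((hu ij.1).1) hS2, ?_⟩
      intro _
      obtain ⟨i2, hi2, e2⟩ := hL2 hne2
      exact ⟨i1 + i2, add_mem hi1 hi2, by rw [gamOf_add, ← e1, ← e2, h3]⟩
    have hone : (1 : KK n).coeff γ₀ = if γ₀ = 0 then 1 else 0 := one_coeff γ₀
    apply hγ₀T.2
    constructor
    · rw [hkey, HahnSeries.coeff_mul, hone]
      refine sub_mem ?_ (sum_mem (fun ij hij => (hterm ij hij).1))
      split_ifs <;> [exact one_mem _; exact zero_mem _]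
    · intro hne
      by_cases hz : γ₀ = 0
      · exact ⟨0, zero_mem _, by rw [hz, gamOf_zero]⟩
      · have : ((x-1) * v).coeff γ₀ ≠ 0 := by
          rw [hkey, hone, if_neg hz] at hne
          intro hh; rw [hh] at hne; simp at hne
        rw [HahnSeries.coeff_mul] at this
        obtain ⟨ij, hij, hne2⟩ := Finset.exists_ne_zero_of_sum_ne_zero this
        exact (hterm ij hij).2 hne2
  intro γ
  by_cases hs : γ ∈ v.support
  · by_contra hc
    have : γ ∈ T := ⟨hs, hc⟩
    rw [hTe] at this
    exact this
  · have : v.coeff γ = 0 := by simpa [HahnSeries.mem_support] using hs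
    rw [this]
    exact ⟨zero_mem _, fun h => absurd rfl h⟩
/-- Inverse monomial to `zv j`. -/
def wv {n : ℕ} (j : Fin n) : KK n := HahnSeries.single (gamOf (-(Pi.single j 1))) 1

theorem zv_mul_wv {n : ℕ} (j : Fin n) : zv j * wv j = 1 := by
  rw [zv, wv, HahnSeries.single_mul_single, ← gamOf_add]
  norm_num [gamOf_zero]

theorem wv_ne_zero {n : ℕ} (j : Fin n) : wv j ≠ 0 :=
  HahnSeries.single_ne_zero one_ne_zero

theorem zv_mul_wv' {n : ℕ} (t j : Fin n) :
    zv t * wv j = HahnSeries.single (gamOf (Pi.single t 1 - Pi.single j 1)) 1 := by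
  rw [zv, wv, HahnSeries.single_mul_single, ← gamOf_add, mul_one, sub_eq_add_neg]

theorem eSub_mem_Lam {n : ℕ} {t j : Fin n} (h : t ≤ j) :
    Pi.single t 1 - Pi.single j 1 ∈ Lam n := by
  rcases lt_or_eq_of_le h with h | h
  · exact AddSubmonoid.subset_closure (Or.inl ⟨t, j, h, rfl⟩)
  · rw [h, sub_self]; exact zero_mem _
theorem negE_mem_Lam {n : ℕ} (j : Fin n) : -Pi.single j 1 ∈ Lam n :=
  AddSubmonoid.subset_closure (Or.inr ⟨j, rfl⟩)

theorem gamOf_eSub_ne {n : ℕ} {t j : Fin n} (h : t ≠ j) :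
    gamOf (Pi.single t 1 - Pi.single j 1) ≠ (0 : Gam n) := by
  rw [← gamOf_zero]
  intro hc
  have := congrFun (gamOf_injective hc) t
  simp [Pi.single_apply, h] at this

theorem gamOf_negE_ne {n : ℕ} (j : Fin n) : gamOf (-Pi.single j 1) ≠ (0 : Gam n) := by
  rw [← gamOf_zero]
  intro hc
  have := congrFun (gamOf_injective hc) j
  simp at this

theorem zS_mul_wv {n : ℕ} (s t : ℕ) (j : Fin n) :
    zS n s t * wv j = ∑ u ∈ Finset.univ.filter (fun u : Fin n => s ≤ u.val + 1 ∧ u.val + 1 ≤ t),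
      HahnSeries.single (gamOf (Pi.single u 1 - Pi.single j 1)) 1 := by
  rw [zS, Finset.sum_mul]
  exact Finset.sum_congr rfl (fun u _ => zv_mul_wv' u j)

theorem zS_mul_wv_mem {n : ℕ} (s t : ℕ) {j : Fin n} (hj : t ≤ j.val + 1) :
    zS n s t * wv j ∈ RR n := by
  rw [zS_mul_wv]
  refine sum_mem (fun u hu => ?_)
  simp only [Finset.mem_filter, Finset.mem_univ, true_and] at hu
  have hle : u ≤ j := by rw [Fin.le_def]; omega
  exact single_mem_RR (eSub_mem_Lam hle) (one_mem _)

theorem coeff0_zS_mul_wv {n : ℕ} (s t : ℕ) {j : Fin n} (hj1 : s ≤ j.val + 1) (hj2 : j.val + 1 ≤ t) :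
    (zS n s t * wv j).coeff 0 = 1 := by
  rw [zS_mul_wv, coeff_sum]
  rw [Finset.sum_eq_single_of_mem j (by simp [hj1, hj2]; omega)]
  · rw [sub_self, gamOf_zero, single_coeff', if_pos rfl]
  · intro u _ hu
    rw [single_coeff', if_neg (fun hc => gamOf_eSub_ne hu hc.symm)]
theorem div_mem_RR {n : ℕ} {a b : KK n} (ha : a ∈ RR n) (hb : b ∈ RR n)
    (hb0 : b.coeff 0 = 1) : a / b ∈ RR n := by
  rw [div_eq_mul_inv]
  exact mul_mem ha (inv_mem_RR hb hb0)

theorem C_mul_wv {n : ℕ} (c : Fdh) (j : Fin n) :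
    HahnSeries.C c * wv j = HahnSeries.single (gamOf (-Pi.single j 1)) c := by
  have : (HahnSeries.C c : KK n) = HahnSeries.single 0 c := rfl
  rw [this, wv, HahnSeries.single_mul_single, zero_add, mul_one]

theorem A0_mem {n : ℕ} : A0 n ∈ RR n := by
  rw [A0]
  refine prod_mem (fun j _ => ?_)
  rw [div_eq_mul_inv, inv_eq_of_mul_eq_one_right (zv_mul_wv j), add_mul, C_mul_wv]
  exact add_mem (zS_mul_wv_mem 1 (j.val + 1) le_rfl)
    (single_mem_RR (negE_mem_Lam j) dh_mem_SF)

theorem A1_mem {n : ℕ} : A1 n ∈ RR n := by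
  rw [A1]
  refine prod_mem (fun p hp => ?_)
  have hp : p.1 < p.2 := by simpa using hp
  have hval : p.1.val < p.2.val := hp
  rw [← mul_div_mul_right (zS n (p.1.val + 1) (p.2.val + 1))
      (zS n (p.1.val + 2) (p.2.val + 1) - zv p.1) (wv_ne_zero p.2)]
  refine div_mem_RR (zS_mul_wv_mem _ _ le_rfl) ?_ ?_
  · rw [sub_mul, zv_mul_wv']
    exact sub_mem (zS_mul_wv_mem _ _ le_rfl)
      (single_mem_RR (eSub_mem_Lam hp.le) (one_mem _))
  · rw [sub_mul, zv_mul_wv', HahnSeries.coeff_sub,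
      coeff0_zS_mul_wv _ _ (by omega) le_rfl,
      single_coeff', if_neg (fun hc => gamOf_eSub_ne hp.ne hc.symm)]
    ring

theorem A2_mem {n : ℕ} : A2 n ∈ RR n := by
  rw [A2]
  refine prod_mem (fun j _ => ?_)
  refine pow_mem ?_ _
  rw [← mul_div_mul_right (zv j) (zS n 1 (j.val + 1) + HahnSeries.C hvar) (wv_ne_zero j),
    zv_mul_wv, add_mul, C_mul_wv]
  refine div_mem_RR (one_mem _) ?_ ?_
  · exact add_mem (zS_mul_wv_mem 1 (j.val + 1) le_rfl)
      (single_mem_RR (negE_mem_Lam j) h_mem_SF)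
  · rw [HahnSeries.coeff_add, coeff0_zS_mul_wv 1 (j.val + 1) (by omega) le_rfl,
      single_coeff', if_neg (fun hc => gamOf_negE_ne j hc.symm)]
    ring

theorem AA_mem {n : ℕ} : AA n ∈ RR n :=
  mul_mem (mul_mem A0_mem A1_mem) A2_mem
end L55



/-- **Lemma 5.5**: for every `i ∈ ℤ^n`, the coefficient of `z^i` in `A` is a polynomial in
`d` and `h` in which every monomial `d^j h^m` occurring with nonzero coefficient satisfies
`j ≤ m`; moreover this coefficient is zero whenever `i ∉ Λ⁺`.  In particular for every
`m ≥ 0` the coefficient of `z^i d^m h^m` in `A` vanishes unless `i ∈ Λ⁺`. -/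
theorem coefficients_of_A (n : ℕ) (hn : 2 ≤ n) (i : Fin n → ℤ) :
    (∃ q : MvPolynomial (Fin 2) ℚ,
        algebraMap (MvPolynomial (Fin 2) ℚ) Fdh q = zcoeff i (AA n) ∧
          ∀ m : Fin 2 →₀ ℕ, MvPolynomial.coeff m q ≠ 0 → m 0 ≤ m 1) ∧
    (i ∉ Lam n → zcoeff i (AA n) = 0) ∧
    (∀ m : ℕ, i ∉ Lam n → Acf n i m m = 0) := by
  obtain ⟨hSF, hLam⟩ := L55.AA_mem (n := n) (gamOf i)
  obtain ⟨q, hq, hqe⟩ := hSF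
  have h2 : i ∉ Lam n → zcoeff i (AA n) = 0 := by
    intro hni
    by_contra hc
    obtain ⟨i', hi', he⟩ := hLam hc
    exact hni (L55.gamOf_injective he ▸ hi')
  refine ⟨⟨q, hqe, hq⟩, h2, ?_⟩
  intro m hni
  rw [Acf, h2 hni, fCoeff]
  have hex : ∃ p : MvPolynomial (Fin 2) ℚ,
      algebraMap (MvPolynomial (Fin 2) ℚ) Fdh p = (0 : Fdh) := ⟨0, map_zero _⟩
  rw [dif_pos hex]
  have hch : hex.choose = 0 := by
    apply IsFractionRing.injective (MvPolynomial (Fin 2) ℚ) Fdh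
    rw [hex.choose_spec, map_zero]
  rw [hch, MvPolynomial.coeff_zero]

end
end

section
/- For every i ∈ ℤ^n with Σi = 0, the coefficient A¹_i of z^i in A¹ is a rational number satisfying |A¹_i| ≤ n^{3·D(i)}. -/
noncomputable section
open scoped Classical

namespace A1Aux

open Finset HahnSeries

variable {n : ℕ}

/-- Hahn series over `ℚ` with the same value group. -/
abbrev KQ (n : ℕ) : Type := HahnSeries (Gam n) ℚ

/-- The defect, as a function of the Hahn exponent. -/
def Dg (n : ℕ) (γ : Gam n) : ℤ := -∑ k : Fin n, ((k.val : ℤ) + 1) * ofLex γ k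

lemma ofLex_zero' (k : Fin n) : ofLex (0 : Gam n) k = 0 := rfl

lemma Dg_zero : Dg n (0 : Gam n) = 0 := by
  unfold Dg
  rw [Finset.sum_congr rfl fun k _ => by rw [ofLex_zero', mul_zero]]
  simp

lemma ofLex_add (γ δ : Gam n) (k : Fin n) : ofLex (γ + δ) k = ofLex γ k + ofLex δ k := rfl

lemma ofLex_gamOf (i : Fin n → ℤ) (k : Fin n) : ofLex (gamOf i) k = -(i k.rev) := rfl

lemma Dg_add (γ δ : Gam n) : Dg n (γ + δ) = Dg n γ + Dg n δ := by
  unfold Dg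
  rw [← neg_add, ← Finset.sum_add_distrib]
  congr 1
  exact Finset.sum_congr rfl fun k _ => by rw [ofLex_add]; ring

lemma Dg_gamOf (i : Fin n → ℤ) : Dg n (gamOf i) = Dfk i := by
  unfold Dg Dfk
  have h1 : ∀ k : Fin n, ((k.val : ℤ) + 1) * ofLex (gamOf i) k
      = -(((n : ℤ) - (k.rev.val : ℤ)) * i k.rev) := by
    intro k
    rw [ofLex_gamOf]
    have hk : ((k.rev.val : ℤ)) = (n : ℤ) - ((k.val : ℤ) + 1) := by
      have := k.isLt
      simp only [Fin.val_rev]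
      omega
    rw [hk]; ring
  rw [Finset.sum_congr rfl fun k _ => h1 k, Finset.sum_neg_distrib, neg_neg]
  exact Fintype.sum_equiv Fin.revPerm _ _ (fun k => rfl)

/-- Hahn exponent of `z_t`. -/
def gbase (t : Fin n) : Gam n := gamOf (Pi.single t 1)

/-- Hahn exponent of `z_s / z_t`. -/
def mexp (s t : Fin n) : Gam n := gbase s - gbase t

lemma ofLex_sub (γ δ : Gam n) (k : Fin n) : ofLex (γ - δ) k = ofLex γ k - ofLex δ k := rfl

lemma ofLex_gbase (t : Fin n) (k : Fin n) :
    ofLex (gbase t) k = if k.rev = t then -1 else 0 := by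
  rw [gbase, ofLex_gamOf]
  by_cases h : k.rev = t
  · rw [if_pos h, h, Pi.single_eq_same]
  · rw [if_neg h, Pi.single_eq_of_ne h, neg_zero]

lemma Dg_sub (γ δ : Gam n) : Dg n (γ - δ) = Dg n γ - Dg n δ := by
  unfold Dg
  rw [Finset.sum_congr rfl fun k _ => by rw [ofLex_sub, mul_sub],
    Finset.sum_sub_distrib]
  ring

lemma Dg_gbase (t : Fin n) : Dg n (gbase t) = (n : ℤ) - t.val := by
  unfold Dg
  have h1 : ∀ k : Fin n, ((k.val : ℤ) + 1) * ofLex (gbase t) k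
      = if k = t.rev then -(((t.rev.val : ℤ)) + 1) else 0 := by
    intro k
    rw [ofLex_gbase]
    by_cases h : k = t.rev
    · subst h; rw [if_pos (Fin.rev_rev t), if_pos rfl]; ring
    · rw [if_neg, if_neg h, mul_zero]
      intro hc; exact h (by rw [← hc, Fin.rev_rev])
  rw [Finset.sum_congr rfl fun k _ => h1 k, Finset.sum_ite_eq' Finset.univ t.rev]
  have := t.isLt
  simp only [Finset.mem_univ, if_pos, Fin.val_rev]
  omega

lemma Dg_mexp (s t : Fin n) : Dg n (mexp s t) = (t.val : ℤ) - s.val := by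
  rw [mexp, Dg_sub, Dg_gbase, Dg_gbase]; ring

lemma mexp_ne_zero {s t : Fin n} (h : s ≠ t) : mexp s t ≠ 0 := by
  intro hc
  have h1 : ofLex (mexp s t) s.rev = 0 := by rw [hc]; rfl
  rw [mexp, ofLex_sub, ofLex_gbase, ofLex_gbase, Fin.rev_rev] at h1
  rw [if_pos rfl, if_neg h] at h1
  norm_num at h1

lemma mexp_pos {s t : Fin n} (h : s < t) : (0 : Gam n) < mexp s t := by
  refine ⟨t.rev, fun m hm => ?_, ?_⟩
  · have h1 : m.rev ≠ s := by
      intro hc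
      have hms : m = s.rev := by rw [← hc, Fin.rev_rev]
      rw [hms] at hm
      have h3 : t < s := Fin.rev_lt_rev.mp hm
      exact absurd h3 (lt_asymm h)
    have h2 : m.rev ≠ t := by
      intro hc
      have : m = t.rev := by rw [← hc, Fin.rev_rev]
      exact absurd this (ne_of_lt hm)
    show (0 : ℤ) = ofLex (mexp s t) m
    rw [mexp, ofLex_sub, ofLex_gbase, ofLex_gbase, if_neg h1, if_neg h2]
    norm_num
  · show ofLex (0 : Gam n) t.rev < ofLex (mexp s t) t.rev
    rw [ofLex_zero', mexp, ofLex_sub, ofLex_gbase, ofLex_gbase, Fin.rev_rev,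
      if_neg (ne_of_gt h), if_pos rfl]
    norm_num

/-- Weighted sum of absolute values of coefficients over a finite set of exponents. -/
def Phi (n : ℕ) (c : ℚ) (x : KQ n) (S : Finset (Gam n)) : ℚ :=
  ∑ γ ∈ S, |x.coeff γ| * c ^ (Dg n γ).toNat

lemma Phi_nonneg {c : ℚ} (hc : 0 ≤ c) (x : KQ n) (S : Finset (Gam n)) :
    0 ≤ Phi n c x S :=
  Finset.sum_nonneg fun γ _ => mul_nonneg (abs_nonneg _) (pow_nonneg hc _)

lemma Phi_add_le {c : ℚ} (hc : 0 ≤ c) (x y : KQ n) (S : Finset (Gam n)) :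
    Phi n c (x + y) S ≤ Phi n c x S + Phi n c y S := by
  rw [Phi, Phi, Phi, ← Finset.sum_add_distrib]
  refine Finset.sum_le_sum fun γ _ => ?_
  rw [coeff_add, ← add_mul]
  exact mul_le_mul_of_nonneg_right (abs_add_le _ _) (pow_nonneg hc _)

lemma Phi_mul {c : ℚ} (hc : 0 ≤ c) {x y : KQ n} {A B : ℚ}
    (hx : ∀ γ, x.coeff γ ≠ 0 → 0 ≤ Dg n γ) (hy : ∀ γ, y.coeff γ ≠ 0 → 0 ≤ Dg n γ)
    (hA : ∀ T, Phi n c x T ≤ A) (hB : ∀ T, Phi n c y T ≤ B)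
    (S : Finset (Gam n)) : Phi n c (x * y) S ≤ A * B := by
  classical
  have hA0 : 0 ≤ A := le_trans (Phi_nonneg hc x ∅) (hA ∅)
  have hB0 : 0 ≤ B := le_trans (Phi_nonneg hc y ∅) (hB ∅)
  set F : Gam n → ℚ := fun γ => |x.coeff γ| * c ^ (Dg n γ).toNat with hF
  set G : Gam n → ℚ := fun γ => |y.coeff γ| * c ^ (Dg n γ).toNat with hG
  have hFn : ∀ γ, 0 ≤ F γ := fun γ => mul_nonneg (abs_nonneg _) (pow_nonneg hc _)
  have hGn : ∀ γ, 0 ≤ G γ := fun γ => mul_nonneg (abs_nonneg _) (pow_nonneg hc _)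
  set AD : Gam n → Finset (Gam n × Gam n) :=
    fun γ => Finset.addAntidiagonal x.isPWO_support y.isPWO_support γ with hAD
  have step1 : Phi n c (x * y) S ≤ ∑ γ ∈ S, ∑ ij ∈ AD γ, F ij.1 * G ij.2 := by
    refine Finset.sum_le_sum fun γ _ => ?_
    rw [HahnSeries.coeff_mul]
    calc |∑ ij ∈ AD γ, x.coeff ij.1 * y.coeff ij.2| * c ^ (Dg n γ).toNat
        ≤ (∑ ij ∈ AD γ, |x.coeff ij.1 * y.coeff ij.2|) * c ^ (Dg n γ).toNat :=
          mul_le_mul_of_nonneg_right (Finset.abs_sum_le_sum_abs _ _) (pow_nonneg hc _)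
      _ = ∑ ij ∈ AD γ, |x.coeff ij.1 * y.coeff ij.2| * c ^ (Dg n γ).toNat :=
          Finset.sum_mul _ _ _
      _ ≤ ∑ ij ∈ AD γ, F ij.1 * G ij.2 := by
          refine Finset.sum_le_sum ?_
          rintro ⟨g1, g2⟩ hij
          obtain ⟨h1, h2, hsum⟩ := Finset.mem_addAntidiagonal.mp hij
          by_cases hx0 : x.coeff g1 = 0
          · rw [hx0, zero_mul, abs_zero, zero_mul]
            exact mul_nonneg (hFn _) (hGn _)
          by_cases hy0 : y.coeff g2 = 0
          · rw [hy0, mul_zero, abs_zero, zero_mul]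
            exact mul_nonneg (hFn _) (hGn _)
          have hD : (Dg n γ).toNat = (Dg n g1).toNat + (Dg n g2).toNat := by
            have e := Dg_add g1 g2
            rw [hsum] at e
            have e1 := hx g1 hx0
            have e2 := hy g2 hy0
            omega
          rw [hD, _root_.pow_add, abs_mul, hF, hG]
          exact le_of_eq (by ring)
  have hdisj : (S : Set (Gam n)).PairwiseDisjoint AD := by
    intro γ1 _ γ2 _ hne
    refine Finset.disjoint_left.mpr fun ij h1 h2 => hne ?_
    obtain ⟨_, _, e1⟩ := Finset.mem_addAntidiagonal.mp h1
    obtain ⟨_, _, e2⟩ := Finset.mem_addAntidiagonal.mp h2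
    exact e1.symm.trans e2
  have step2 : ∑ γ ∈ S, ∑ ij ∈ AD γ, F ij.1 * G ij.2
      = ∑ ij ∈ S.biUnion AD, F ij.1 * G ij.2 := (Finset.sum_biUnion hdisj).symm
  set T := S.biUnion AD with hT
  have step3 : ∑ ij ∈ T, F ij.1 * G ij.2
      ≤ ∑ ij ∈ (T.image Prod.fst) ×ˢ (T.image Prod.snd), F ij.1 * G ij.2 := by
    refine Finset.sum_le_sum_of_subset_of_nonneg ?_ ?_
    · intro ij hij
      exact Finset.mem_product.mpr
        ⟨Finset.mem_image_of_mem _ hij, Finset.mem_image_of_mem _ hij⟩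
    · intro ij _ _
      exact mul_nonneg (hFn _) (hGn _)
  have step4 : ∑ ij ∈ (T.image Prod.fst) ×ˢ (T.image Prod.snd), F ij.1 * G ij.2
      = Phi n c x (T.image Prod.fst) * Phi n c y (T.image Prod.snd) := by
    rw [Finset.sum_product]
    exact (Finset.sum_mul_sum _ _ _ _).symm
  calc Phi n c (x * y) S ≤ ∑ γ ∈ S, ∑ ij ∈ AD γ, F ij.1 * G ij.2 := step1
    _ = ∑ ij ∈ T, F ij.1 * G ij.2 := step2
    _ ≤ ∑ ij ∈ (T.image Prod.fst) ×ˢ (T.image Prod.snd), F ij.1 * G ij.2 := step3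
    _ = Phi n c x (T.image Prod.fst) * Phi n c y (T.image Prod.snd) := step4
    _ ≤ A * B :=
        mul_le_mul (hA _) (hB _) (Phi_nonneg hc _ _) hA0

/-- The key boundedness predicate. -/
structure Gd (n : ℕ) (c : ℚ) (x : KQ n) (B : ℚ) : Prop where
  czero : x.coeff 0 = 1
  low : ∀ γ : Gam n, γ ≠ 0 → Dg n γ ≤ 0 → x.coeff γ = 0
  phi : ∀ S : Finset (Gam n), Phi n c x S ≤ B

lemma Gd.supp {c : ℚ} {x : KQ n} {B : ℚ} (h : Gd n c x B) :
    ∀ γ, x.coeff γ ≠ 0 → 0 ≤ Dg n γ := by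
  intro γ hγ
  by_contra h'
  push_neg at h'
  refine hγ (h.low γ ?_ h'.le)
  rintro rfl
  rw [Dg_zero] at h'
  exact absurd h' (lt_irrefl 0)

lemma Gd.mono {c : ℚ} {x : KQ n} {B B' : ℚ} (h : Gd n c x B) (hBB : B ≤ B') :
    Gd n c x B' :=
  ⟨h.czero, h.low, fun S => le_trans (h.phi S) hBB⟩

lemma Gd.mul {c : ℚ} (hc : 0 ≤ c) {x y : KQ n} {A B : ℚ}
    (hx : Gd n c x A) (hy : Gd n c y B) : Gd n c (x * y) (A * B) := by
  classical
  refine ⟨?_, ?_, Phi_mul hc hx.supp hy.supp hx.phi hy.phi⟩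
  · rw [HahnSeries.coeff_mul]
    have hmem : ((0 : Gam n), (0 : Gam n)) ∈
        Finset.antidiagonal x.isPWO_support y.isPWO_support 0 := by
      rw [Finset.mem_antidiagonal]
      refine ⟨?_, ?_, add_zero 0⟩
      · simp only [HahnSeries.mem_support, hx.czero]; exact one_ne_zero
      · simp only [HahnSeries.mem_support, hy.czero]; exact one_ne_zero
    rw [Finset.sum_eq_single_of_mem _ hmem]
    · rw [hx.czero, hy.czero, one_mul]
    · rintro ⟨g1, g2⟩ hij hne
      obtain ⟨_, _, hsum⟩ := Finset.mem_addAntidiagonal.mp hij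
      rcases eq_or_ne g1 0 with rfl | hg1
      · have hg2 : g2 = 0 := by simpa using hsum
        exact absurd (show ((0 : Gam n), g2) = ((0 : Gam n), (0 : Gam n)) by rw [hg2]) hne
      · rcases le_or_gt (Dg n g1) 0 with hD | hD
        · rw [hx.low g1 hg1 hD, zero_mul]
        · have e := Dg_add g1 g2
          rw [hsum, Dg_zero] at e
          have hD2 : Dg n g2 < 0 := by omega
          have hg2 : g2 ≠ 0 := by
            rintro rfl
            rw [Dg_zero] at hD2
            exact absurd hD2 (lt_irrefl 0)
          rw [hy.low g2 hg2 hD2.le, mul_zero]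
  · intro γ hγ0 hγD
    rw [HahnSeries.coeff_mul]
    refine Finset.sum_eq_zero ?_
    rintro ⟨g1, g2⟩ hij
    obtain ⟨_, _, hsum⟩ := Finset.mem_addAntidiagonal.mp hij
    rcases eq_or_ne g1 0 with rfl | hg1
    · have hg2γ : g2 = γ := by simpa using hsum
      rw [hy.low g2 (by rw [hg2γ]; exact hγ0) (by rw [hg2γ]; exact hγD), mul_zero]
    · rcases le_or_gt (Dg n g1) 0 with hD | hD
      · rw [hx.low g1 hg1 hD, zero_mul]
      · have e := Dg_add g1 g2
        rw [hsum] at e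
        have hD2 : Dg n g2 < 0 := by omega
        have hg2 : g2 ≠ 0 := by
          rintro rfl
          rw [Dg_zero] at hD2
          exact absurd hD2 (lt_irrefl 0)
        rw [hy.low g2 hg2 hD2.le, mul_zero]

lemma Phi_one_le {c : ℚ} (hc : 0 ≤ c) (S : Finset (Gam n)) :
    Phi n c (1 : KQ n) S ≤ 1 := by
  classical
  have h1 : ∀ γ ∈ S, |(1 : KQ n).coeff γ| * c ^ (Dg n γ).toNat
      = if γ = 0 then 1 else 0 := by
    intro γ _
    rcases eq_or_ne γ 0 with rfl | hγ
    · rw [if_pos rfl, HahnSeries.coeff_one, if_pos rfl, Dg_zero]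
      norm_num
    · rw [if_neg hγ, HahnSeries.coeff_one, if_neg hγ, abs_zero, zero_mul]
  rw [Phi, Finset.sum_congr rfl h1, Finset.sum_ite_eq' S 0 (fun _ => (1 : ℚ))]
  split_ifs <;> norm_num

lemma Gd.one {c : ℚ} (hc : 0 ≤ c) : Gd n c (1 : KQ n) 1 := by
  refine ⟨?_, ?_, Phi_one_le hc⟩
  · rw [HahnSeries.coeff_one, if_pos rfl]
  · intro γ hγ _
    rw [HahnSeries.coeff_one, if_neg hγ]

lemma Gd.prod {c : ℚ} (hc : 0 ≤ c) {ι : Type*} (s : Finset ι) (f : ι → KQ n) (Bf : ℚ)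
    (h : ∀ p ∈ s, Gd n c (f p) Bf) : Gd n c (∏ p ∈ s, f p) (Bf ^ s.card) := by
  classical
  induction s using Finset.induction_on with
  | empty => simpa using Gd.one hc
  | insert _ _ hnotmem ih =>
    rename_i a s'
    rw [Finset.prod_insert hnotmem, Finset.card_insert_of_notMem hnotmem, pow_succ,
      mul_comm (Bf ^ s'.card) Bf]
    exact Gd.mul hc (h a (Finset.mem_insert_self a s'))
      (ih fun p hp => h p (Finset.mem_insert_of_mem hp))

/-- Sum of monomials `z_j/z_b` with coefficients `ε j`, over `j ∈ I`. -/
def msum (b : Fin n) (I : Finset (Fin n)) (ε : Fin n → ℚ) : KQ n :=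
  ∑ j ∈ I, HahnSeries.single (mexp j b) (ε j)

/-- Taking a coefficient is additive. -/
def coeffHom (g : Gam n) : KQ n →+ ℚ where
  toFun x := x.coeff g
  map_zero' := rfl
  map_add' _ _ := coeff_add

lemma msum_coeff (b : Fin n) (I : Finset (Fin n)) (ε : Fin n → ℚ) (γ : Gam n) :
    (msum b I ε).coeff γ = ∑ j ∈ I, (if γ = mexp j b then ε j else 0) := by
  refine (map_sum (coeffHom γ) _ I).trans (Finset.sum_congr rfl fun j _ => ?_)
  show (HahnSeries.single (mexp j b) (ε j)).coeff γ = _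
  simp [HahnSeries.coeff_single]

lemma msum_supp {b : Fin n} {I : Finset (Fin n)} {ε : Fin n → ℚ} {γ : Gam n}
    (h : (msum b I ε).coeff γ ≠ 0) : ∃ j ∈ I, γ = mexp j b := by
  rw [msum_coeff] at h
  obtain ⟨j, hj, hne⟩ := Finset.exists_ne_zero_of_sum_ne_zero h
  refine ⟨j, hj, ?_⟩
  by_contra hc
  rw [if_neg hc] at hne
  exact hne rfl

lemma geomsum_le {c : ℚ} (hc : 0 ≤ c) (hc1 : c < 1) (m : ℕ) :
    ∑ k ∈ Finset.range m, c ^ k ≤ 1 / (1 - c) := by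
  have h1 : (0:ℚ) < 1 - c := by linarith
  rw [le_div_iff₀ h1]
  have h2 := geom_sum_mul c m
  have h3 : (∑ k ∈ Finset.range m, c ^ k) * (1 - c) = 1 - c ^ m := by
    linear_combination -h2
  rw [h3]
  have := pow_nonneg hc m
  linarith

lemma mexp_sum_le {c : ℚ} (hc : 0 ≤ c) (hc1 : c < 1) (b : Fin n) (I : Finset (Fin n))
    (hI : ∀ j ∈ I, j.val < b.val) :
    ∑ j ∈ I, c ^ (b.val - j.val) ≤ c / (1 - c) := by
  classical
  have h1 : ∀ j ∈ I, c ^ (b.val - j.val) = c * c ^ (b.val - 1 - j.val) := by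
    intro j hj
    have := hI j hj
    rw [← pow_succ']
    congr 1
    omega
  rw [Finset.sum_congr rfl h1, ← Finset.mul_sum]
  have h2 : ∑ j ∈ I, c ^ (b.val - 1 - j.val) ≤ 1 / (1 - c) := by
    have hinj : ∀ x ∈ I, ∀ y ∈ I, b.val - 1 - x.val = b.val - 1 - y.val → x = y := by
      intro j1 hj1 j2 hj2 he
      have := hI j1 hj1
      have := hI j2 hj2
      exact Fin.ext (by omega)
    calc ∑ j ∈ I, c ^ (b.val - 1 - j.val)
        = ∑ m ∈ I.image (fun j : Fin n => b.val - 1 - j.val), c ^ m :=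
          (Finset.sum_image hinj).symm
      _ ≤ ∑ m ∈ Finset.range n, c ^ m := by
          refine Finset.sum_le_sum_of_subset_of_nonneg ?_ fun m _ _ => pow_nonneg hc m
          intro m hm
          obtain ⟨j, hj, rfl⟩ := Finset.mem_image.mp hm
          have := hI j hj
          have := b.isLt
          exact Finset.mem_range.mpr (by omega)
      _ ≤ 1 / (1 - c) := geomsum_le hc hc1 n
  calc c * ∑ j ∈ I, c ^ (b.val - 1 - j.val) ≤ c * (1 / (1 - c)) :=
        mul_le_mul_of_nonneg_left h2 hc
    _ = c / (1 - c) := by ring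

lemma Dg_mexp_toNat {b j : Fin n} (hj : j.val < b.val) :
    (Dg n (mexp j b)).toNat = b.val - j.val := by
  rw [Dg_mexp]
  omega

lemma msum_phi {c : ℚ} (hc : 0 ≤ c) (hc1 : c < 1) (b : Fin n) (I : Finset (Fin n))
    (ε : Fin n → ℚ) (hI : ∀ j ∈ I, j.val < b.val) (hε : ∀ j, |ε j| ≤ 1)
    (S : Finset (Gam n)) : Phi n c (msum b I ε) S ≤ c / (1 - c) := by
  classical
  have step1 : Phi n c (msum b I ε) S
      ≤ ∑ γ ∈ S, ∑ j ∈ I, (if γ = mexp j b then c ^ (b.val - j.val) else 0) := by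
    refine Finset.sum_le_sum fun γ _ => ?_
    rw [msum_coeff]
    calc |∑ j ∈ I, (if γ = mexp j b then ε j else 0)| * c ^ (Dg n γ).toNat
        ≤ (∑ j ∈ I, |if γ = mexp j b then ε j else 0|) * c ^ (Dg n γ).toNat :=
          mul_le_mul_of_nonneg_right (Finset.abs_sum_le_sum_abs _ _) (pow_nonneg hc _)
      _ = ∑ j ∈ I, |if γ = mexp j b then ε j else 0| * c ^ (Dg n γ).toNat :=
          Finset.sum_mul _ _ _
      _ ≤ ∑ j ∈ I, (if γ = mexp j b then c ^ (b.val - j.val) else 0) := by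
          refine Finset.sum_le_sum fun j hj => ?_
          rcases eq_or_ne γ (mexp j b) with rfl | hne
          · rw [if_pos rfl, if_pos rfl, Dg_mexp_toNat (hI j hj)]
            calc |ε j| * c ^ (b.val - j.val) ≤ 1 * c ^ (b.val - j.val) :=
                  mul_le_mul_of_nonneg_right (hε j) (pow_nonneg hc _)
              _ = c ^ (b.val - j.val) := one_mul _
          · rw [if_neg hne, if_neg hne, abs_zero, zero_mul]
  rw [Finset.sum_comm] at step1
  have step2 : ∑ j ∈ I, ∑ γ ∈ S, (if γ = mexp j b then c ^ (b.val - j.val) else 0)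
      ≤ ∑ j ∈ I, c ^ (b.val - j.val) := by
    refine Finset.sum_le_sum fun j hj => ?_
    rw [Finset.sum_ite_eq' S (mexp j b) (fun _ => c ^ (b.val - j.val))]
    split_ifs
    · exact le_refl _
    · exact pow_nonneg hc _
  exact le_trans step1 (le_trans step2 (mexp_sum_le hc hc1 b I hI))

lemma msum_coeff_zero (b : Fin n) (I : Finset (Fin n)) (ε : Fin n → ℚ)
    (hI : ∀ j ∈ I, j.val < b.val) : (msum b I ε).coeff 0 = 0 := by
  by_contra h
  obtain ⟨j, hj, he⟩ := msum_supp h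
  have hjb : j ≠ b := by
    have := hI j hj
    intro hc
    rw [hc] at this
    omega
  exact mexp_ne_zero hjb he.symm

lemma msum_Dg {b : Fin n} {I : Finset (Fin n)} {ε : Fin n → ℚ} {γ : Gam n}
    (hI : ∀ j ∈ I, j.val < b.val) (h : (msum b I ε).coeff γ ≠ 0) : 1 ≤ Dg n γ := by
  obtain ⟨j, hj, he⟩ := msum_supp h
  rw [he, Dg_mexp]
  have := hI j hj
  omega

lemma Gd_one_add_msum {c : ℚ} (hc : 0 ≤ c) (hc1 : c < 1) (b : Fin n)
    (I : Finset (Fin n)) (ε : Fin n → ℚ) (hI : ∀ j ∈ I, j.val < b.val)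
    (hε : ∀ j, |ε j| ≤ 1) : Gd n c (1 + msum b I ε) (1 + c / (1 - c)) := by
  refine ⟨?_, ?_, fun S => ?_⟩
  · rw [coeff_add, HahnSeries.coeff_one, if_pos rfl, msum_coeff_zero b I ε hI, add_zero]
  · intro γ hγ hD
    rw [coeff_add, HahnSeries.coeff_one, if_neg hγ, zero_add]
    by_contra h
    have := msum_Dg hI h
    omega
  · exact le_trans (Phi_add_le hc 1 _ S)
      (add_le_add (Phi_one_le hc S) (msum_phi hc hc1 b I ε hI hε S))

lemma pow_supp {x : KQ n} (hx1 : ∀ γ, x.coeff γ ≠ 0 → 1 ≤ Dg n γ) :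
    ∀ (k : ℕ) (γ : Gam n), (x ^ k).coeff γ ≠ 0 → (k : ℤ) ≤ Dg n γ := by
  intro k
  induction k with
  | zero =>
    intro γ h
    rw [pow_zero] at h
    have hγ : γ = 0 := by
      by_contra hne
      rw [HahnSeries.coeff_one, if_neg hne] at h
      exact h rfl
    rw [hγ, Dg_zero]
    norm_num
  | succ k ih =>
    intro γ h
    rw [pow_succ, HahnSeries.coeff_mul] at h
    obtain ⟨ij, hij, hne⟩ := Finset.exists_ne_zero_of_sum_ne_zero h
    obtain ⟨_, _, hsum⟩ := Finset.mem_addAntidiagonal.mp hij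
    have hk := ih ij.1 (left_ne_zero_of_mul hne)
    have h1 := hx1 ij.2 (right_ne_zero_of_mul hne)
    have e := Dg_add ij.1 ij.2
    rw [hsum] at e
    push_cast
    omega

lemma pow_phi {c : ℚ} (hc : 0 ≤ c) {x : KQ n} {β : ℚ}
    (hx1 : ∀ γ, x.coeff γ ≠ 0 → 1 ≤ Dg n γ) (hβ : ∀ T, Phi n c x T ≤ β) :
    ∀ (k : ℕ) (S : Finset (Gam n)), Phi n c (x ^ k) S ≤ β ^ k := by
  intro k
  induction k with
  | zero =>
    intro S
    rw [pow_zero, pow_zero]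
    exact Phi_one_le hc S
  | succ k ih =>
    intro S
    rw [pow_succ, pow_succ]
    refine Phi_mul hc ?_ ?_ ih hβ S
    · intro γ h
      have := pow_supp hx1 k γ h
      omega
    · intro γ h
      have := hx1 γ h
      omega

lemma orderTop_pos_of (x : KQ n) (h : ∀ γ, x.coeff γ ≠ 0 → (0 : Gam n) < γ) :
    0 < x.orderTop := by
  rcases eq_or_ne x 0 with rfl | hx
  · rw [HahnSeries.orderTop_zero]
    exact WithTop.coe_lt_top 0
  · exact HahnSeries.zero_lt_orderTop_of_order (h _ (mt HahnSeries.coeff_order_eq_zero.mp hx))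

section Pser

variable {c : ℚ} {x : KQ n} (hpos : 0 < x.orderTop)

lemma P_coeff_eq (hpos : 0 < x.orderTop) (hx1 : ∀ γ, x.coeff γ ≠ 0 → 1 ≤ Dg n γ) (γ : Gam n) (m : ℕ)
    (hm : (Dg n γ).toNat < m) :
    ((HahnSeries.SummableFamily.powers x).hsum).coeff γ
      = ∑ k ∈ Finset.range m, (x ^ k).coeff γ := by
  rw [HahnSeries.SummableFamily.coeff_hsum_eq_sum_of_subset (t := Finset.range m)]
  · simp only [HahnSeries.SummableFamily.powers_of_orderTop_pos hpos]
  intro k hk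
  simp only [HahnSeries.SummableFamily.powers_of_orderTop_pos hpos, Set.mem_setOf_eq] at hk
  have h1 := pow_supp hx1 k γ hk
  have h2 : (0 : ℤ) ≤ Dg n γ := le_trans (by positivity) h1
  simp only [Finset.coe_range, Set.mem_Iio]
  omega

lemma Gd_P (hpos : 0 < x.orderTop) {β : ℚ} (hc : 0 ≤ c) (hβ1 : β < 1)
    (hx1 : ∀ γ, x.coeff γ ≠ 0 → 1 ≤ Dg n γ) (hβ : ∀ T, Phi n c x T ≤ β) :
    Gd n c ((HahnSeries.SummableFamily.powers x).hsum) (1 / (1 - β)) := by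
  classical
  have hβ0 : 0 ≤ β := le_trans (Phi_nonneg hc x ∅) (hβ ∅)
  refine ⟨?_, ?_, fun S => ?_⟩
  · rw [P_coeff_eq hpos hx1 0 1 (by rw [Dg_zero]; norm_num), Finset.sum_range_one,
      pow_zero, HahnSeries.coeff_one, if_pos rfl]
  · intro γ hγ hD
    rw [P_coeff_eq hpos hx1 γ 1 (by omega), Finset.sum_range_one, pow_zero,
      HahnSeries.coeff_one, if_neg hγ]
  · set m := 1 + S.sup (fun γ => (Dg n γ).toNat) with hm
    have hcoeff : ∀ γ ∈ S,
        ((HahnSeries.SummableFamily.powers x).hsum).coeff γ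
          = ∑ k ∈ Finset.range m, (x ^ k).coeff γ := by
      intro γ hγ
      refine P_coeff_eq hpos hx1 γ m ?_
      have h2 : (Dg n γ).toNat ≤ S.sup (fun γ => (Dg n γ).toNat) :=
        Finset.le_sup (f := fun γ => (Dg n γ).toNat) hγ
      omega
    have step1 : Phi n c ((HahnSeries.SummableFamily.powers x).hsum) S
        ≤ ∑ γ ∈ S, ∑ k ∈ Finset.range m, |(x ^ k).coeff γ| * c ^ (Dg n γ).toNat := by
      refine Finset.sum_le_sum fun γ hγ => ?_
      rw [hcoeff γ hγ]
      calc |∑ k ∈ Finset.range m, (x ^ k).coeff γ| * c ^ (Dg n γ).toNat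
          ≤ (∑ k ∈ Finset.range m, |(x ^ k).coeff γ|) * c ^ (Dg n γ).toNat :=
            mul_le_mul_of_nonneg_right (Finset.abs_sum_le_sum_abs _ _) (pow_nonneg hc _)
        _ = ∑ k ∈ Finset.range m, |(x ^ k).coeff γ| * c ^ (Dg n γ).toNat :=
            Finset.sum_mul _ _ _
    rw [Finset.sum_comm] at step1
    have step2 : ∑ k ∈ Finset.range m, ∑ γ ∈ S, |(x ^ k).coeff γ| * c ^ (Dg n γ).toNat
        ≤ ∑ k ∈ Finset.range m, β ^ k :=
      Finset.sum_le_sum fun k _ => pow_phi hc hx1 hβ k S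
    exact le_trans step1 (le_trans step2 (geomsum_le hβ0 hβ1 m))

end Pser

/-- `z_j` over `ℚ`. -/
def zqv (j : Fin n) : KQ n := HahnSeries.single (gamOf (Pi.single j 1)) 1

lemma zqv_eq (j : Fin n) : zqv j = HahnSeries.single (gbase j) 1 := rfl

/-- The mirror of `zS` over `ℚ`. -/
def zSq (n : ℕ) (s t : ℕ) : KQ n :=
  ∑ j ∈ Finset.univ.filter (fun j : Fin n => s ≤ j.val + 1 ∧ j.val + 1 ≤ t), zqv j

/-- The mirror of `A1` over `ℚ`. -/
def A1q (n : ℕ) : KQ n :=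
  ∏ p ∈ Finset.univ.filter (fun p : Fin n × Fin n => p.1 < p.2),
    zSq n (p.1.val + 1) (p.2.val + 1) / (zSq n (p.1.val + 2) (p.2.val + 1) - zqv p.1)

/-- `z_b⁻¹` over `ℚ`. -/
def zinv (b : Fin n) : KQ n := HahnSeries.single (-(gbase b)) 1

def J1 (a b : Fin n) : Finset (Fin n) :=
  Finset.univ.filter fun j => a.val ≤ j.val ∧ j.val < b.val

def J2 (a b : Fin n) : Finset (Fin n) :=
  Finset.univ.filter fun j => a.val < j.val ∧ j.val < b.val

def εv (a : Fin n) : Fin n → ℚ := fun j => if j = a then (1 : ℚ) else (-1 : ℚ)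

lemma zqv_mul_zinv (j b : Fin n) : zqv j * zinv b = HahnSeries.single (mexp j b) 1 := by
  rw [zqv_eq, zinv, HahnSeries.single_mul_single, mul_one, mexp, sub_eq_add_neg]

lemma zinv_mul_self (b : Fin n) : zqv b * zinv b = 1 := by
  rw [zqv_eq, zinv, HahnSeries.single_mul_single, mul_one, add_neg_cancel,
    HahnSeries.single_zero_one]

lemma single_neg_one (γ : Gam n) :
    HahnSeries.single γ (-1 : ℚ) = -HahnSeries.single γ 1 := by
  ext g
  rw [HahnSeries.coeff_neg, HahnSeries.coeff_single, HahnSeries.coeff_single]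
  split_ifs <;> norm_num

lemma zSq_split_num {a b : Fin n} (hab : a < b) :
    zSq n (a.val + 1) (b.val + 1) = zqv b + ∑ j ∈ J1 a b, zqv j := by
  classical
  have hval : a.val < b.val := hab
  have hset : (Finset.univ.filter
      (fun j : Fin n => a.val + 1 ≤ j.val + 1 ∧ j.val + 1 ≤ b.val + 1))
      = insert b (J1 a b) := by
    ext j
    simp only [Finset.mem_filter, Finset.mem_univ, true_and, Finset.mem_insert, J1,
      Fin.ext_iff]
    omega
  have hnot : b ∉ J1 a b := by
    simp only [J1, Finset.mem_filter, Finset.mem_univ, true_and]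
    omega
  rw [zSq, hset, Finset.sum_insert hnot]

lemma zSq_split_den {a b : Fin n} (hab : a < b) :
    zSq n (a.val + 2) (b.val + 1) = zqv b + ∑ j ∈ J2 a b, zqv j := by
  classical
  have hval : a.val < b.val := hab
  have hset : (Finset.univ.filter
      (fun j : Fin n => a.val + 2 ≤ j.val + 1 ∧ j.val + 1 ≤ b.val + 1))
      = insert b (J2 a b) := by
    ext j
    simp only [Finset.mem_filter, Finset.mem_univ, true_and, Finset.mem_insert, J2,
      Fin.ext_iff]
    omega
  have hnot : b ∉ J2 a b := by
    simp only [J2, Finset.mem_filter, Finset.mem_univ, true_and]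
    omega
  rw [zSq, hset, Finset.sum_insert hnot]

lemma num_mul_zinv {a b : Fin n} (hab : a < b) :
    zSq n (a.val + 1) (b.val + 1) * zinv b = 1 + msum b (J1 a b) (fun _ => 1) := by
  rw [zSq_split_num hab, add_mul, zinv_mul_self, Finset.sum_mul, msum]
  congr 1
  exact Finset.sum_congr rfl fun j _ => zqv_mul_zinv j b

lemma den_mul_zinv {a b : Fin n} (hab : a < b) :
    (zSq n (a.val + 2) (b.val + 1) - zqv a) * zinv b
      = 1 - msum b (insert a (J2 a b)) (εv a) := by
  classical
  have hnot : a ∉ J2 a b := by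
    simp only [J2, Finset.mem_filter, Finset.mem_univ, true_and]
    omega
  rw [zSq_split_den hab, sub_mul, add_mul, zinv_mul_self, Finset.sum_mul, msum,
    Finset.sum_insert hnot]
  have h1 : ∀ j ∈ J2 a b, HahnSeries.single (mexp j b) (εv a j)
      = -HahnSeries.single (mexp j b) 1 := by
    intro j hj
    have hja : j ≠ a := by
      simp only [J2, Finset.mem_filter, Finset.mem_univ, true_and] at hj
      intro hc
      rw [hc] at hj
      omega
    rw [εv, if_neg hja, single_neg_one]
  rw [Finset.sum_congr rfl h1, εv, if_pos rfl]
  rw [Finset.sum_congr rfl (fun j _ => zqv_mul_zinv j b), zqv_mul_zinv a b]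
  rw [Finset.sum_neg_distrib]
  ring

lemma Gd_factor {c : ℚ} (hc : 0 < c) (hc8 : c ≤ 1/8) {a b : Fin n} (hab : a < b) :
    Gd n c (zSq n (a.val + 1) (b.val + 1) / (zSq n (a.val + 2) (b.val + 1) - zqv a))
      (1 / (1 - 2*c)) := by
  classical
  have hval : a.val < b.val := hab
  have hc1 : c < 1 := by linarith
  have h1c : (0:ℚ) < 1 - c := by linarith
  set β : ℚ := c / (1 - c) with hβdef
  have hβ0 : 0 ≤ β := div_nonneg hc.le h1c.le
  have hβ1 : β < 1 := by
    rw [hβdef, div_lt_one h1c]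
    linarith
  set vv : KQ n := msum b (insert a (J2 a b)) (εv a) with hvv
  have hIv : ∀ j ∈ insert a (J2 a b), j.val < b.val := by
    intro j hj
    rcases Finset.mem_insert.mp hj with rfl | hj2
    · exact hval
    · simp only [J2, Finset.mem_filter, Finset.mem_univ, true_and] at hj2
      omega
  have hεv : ∀ j, |εv a j| ≤ 1 := by
    intro j
    rw [εv]
    split_ifs <;> norm_num
  have hJ1 : ∀ j ∈ J1 a b, j.val < b.val := by
    intro j hj
    simp only [J1, Finset.mem_filter, Finset.mem_univ, true_and] at hj
    omega
  have hv1 : ∀ γ, vv.coeff γ ≠ 0 → 1 ≤ Dg n γ := fun γ h => msum_Dg hIv h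
  have hvpos : 0 < vv.orderTop := by
    refine orderTop_pos_of _ fun γ h => ?_
    obtain ⟨j, hj, rfl⟩ := msum_supp h
    exact mexp_pos (Fin.lt_def.mpr (hIv j hj))
  have hβv : ∀ T, Phi n c vv T ≤ β := fun T => msum_phi hc.le hc1 b _ _ hIv hεv T
  set P : KQ n := (HahnSeries.SummableFamily.powers vv).hsum with hP
  have hPgd : Gd n c P (1 / (1 - β)) := Gd_P hvpos hc.le hβ1 hv1 hβv
  have hWgd : Gd n c (1 + msum b (J1 a b) (fun _ => 1)) (1 + β) :=
    Gd_one_add_msum hc.le hc1 b (J1 a b) (fun _ => 1) hJ1 (fun j => by norm_num)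
  have h1 : (1 - vv) * P = 1 :=
    HahnSeries.SummableFamily.one_sub_self_mul_hsum_powers hvpos
  have hzinv_ne : zinv b ≠ 0 := HahnSeries.single_ne_zero one_ne_zero
  have h1v_ne : (1 - vv) ≠ 0 := by
    intro h
    rw [h, zero_mul] at h1
    exact zero_ne_one h1
  have hden_ne : zSq n (a.val + 2) (b.val + 1) - zqv a ≠ 0 := by
    intro h
    have h2 := den_mul_zinv hab
    rw [h, zero_mul] at h2
    exact h1v_ne h2.symm
  have hfac : zSq n (a.val + 1) (b.val + 1) / (zSq n (a.val + 2) (b.val + 1) - zqv a)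
      = (1 + msum b (J1 a b) (fun _ => 1)) * P := by
    rw [div_eq_iff hden_ne]
    refine mul_right_cancel₀ hzinv_ne ?_
    rw [num_mul_zinv hab, mul_assoc _ _ (zinv b), den_mul_zinv hab,
      mul_assoc (1 + msum b (J1 a b) (fun _ => 1)) P (1 - vv), mul_comm P (1 - vv), h1,
      mul_one]
  rw [hfac]
  refine (Gd.mul hc.le hWgd hPgd).mono ?_
  have h2c : (0:ℚ) < 1 - 2*c := by linarith
  have hβlt : (0:ℚ) < 1 - β := by linarith
  have heq : (1 + β) * (1 / (1 - β)) = 1 / (1 - 2*c) := by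
    have hβne : 1 - β ≠ 0 := ne_of_gt hβlt
    have h2cne : 1 - 2*c ≠ 0 := ne_of_gt h2c
    have h1cne : 1 - c ≠ 0 := ne_of_gt h1c
    rw [mul_one_div, div_eq_div_iff hβne h2cne, hβdef]
    field_simp
    ring
  exact le_of_eq heq

lemma card_lt_pairs (n : ℕ) :
    2 * (Finset.univ.filter (fun p : Fin n × Fin n => p.1 < p.2)).card ≤ n * n := by
  classical
  set L := Finset.univ.filter (fun p : Fin n × Fin n => p.1 < p.2) with hL
  set G := Finset.univ.filter (fun p : Fin n × Fin n => p.2 < p.1) with hG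
  have hcard : L.card = G.card := by
    refine Finset.card_bij' (fun p _ => (p.2, p.1)) (fun p _ => (p.2, p.1)) ?_ ?_ ?_ ?_
    · intro p hp
      simp only [hL, Finset.mem_filter, Finset.mem_univ, true_and] at hp
      simp only [hG, Finset.mem_filter, Finset.mem_univ, true_and]
      exact hp
    · intro p hp
      simp only [hG, Finset.mem_filter, Finset.mem_univ, true_and] at hp
      simp only [hL, Finset.mem_filter, Finset.mem_univ, true_and]
      exact hp
    · intro p _
      rfl
    · intro p _
      rfl
  have hdisj : Disjoint L G := by
    refine Finset.disjoint_left.mpr fun p hp1 hp2 => ?_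
    simp only [hL, Finset.mem_filter, Finset.mem_univ, true_and] at hp1
    simp only [hG, Finset.mem_filter, Finset.mem_univ, true_and] at hp2
    exact absurd hp2 (lt_asymm hp1)
  have hunion : L.card + G.card ≤ n * n := by
    rw [← Finset.card_union_of_disjoint hdisj]
    calc (L ∪ G).card ≤ (Finset.univ : Finset (Fin n × Fin n)).card :=
          Finset.card_le_card (Finset.subset_univ _)
      _ = n * n := by rw [Finset.card_univ]; simp [Fintype.card_prod]
  omega

lemma Gd_A1q (n : ℕ) (hn : 2 ≤ n) : Gd n (1/(n:ℚ)^3) (A1q n) 2 := by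
  classical
  set c : ℚ := 1/(n:ℚ)^3 with hcdef
  have hn2 : (2:ℚ) ≤ (n:ℚ) := by exact_mod_cast hn
  have hnpos : (0:ℚ) < n := by linarith
  have hc : 0 < c := by rw [hcdef]; positivity
  have hc8 : c ≤ 1/8 := by
    rw [hcdef, div_le_div_iff₀ (by positivity) (by norm_num)]
    have h8 : (2:ℚ)^3 ≤ (n:ℚ)^3 := pow_le_pow_left₀ (by norm_num) hn2 3
    norm_num at h8 ⊢
    linarith
  set F := Finset.univ.filter (fun p : Fin n × Fin n => p.1 < p.2) with hF
  have hmain : Gd n c (A1q n) ((1/(1-2*c)) ^ F.card) := by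
    rw [A1q]
    refine Gd.prod hc.le F _ _ ?_
    rintro ⟨a, b⟩ hp
    have hab : a < b := by
      rw [hF, Finset.mem_filter] at hp
      exact hp.2
    exact Gd_factor hc hc8 hab
  refine hmain.mono ?_
  have h2cpos : (0:ℚ) < 1 - 2*c := by linarith
  have hcardF : 2 * F.card ≤ n * n := card_lt_pairs n
  have hFc : (F.card : ℚ) * (2*c) ≤ 1/2 := by
    have h1 : ((2 * F.card : ℕ) : ℚ) ≤ ((n * n : ℕ) : ℚ) := by exact_mod_cast hcardF
    push_cast at h1
    have h3 : (0:ℚ) < (n:ℚ)^3 := by positivity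
    calc (F.card : ℚ) * (2*c) = (2 * F.card) * (1/(n:ℚ)^3) := by rw [hcdef]; ring
      _ ≤ ((n:ℚ) * n) * (1/(n:ℚ)^3) := by
          refine mul_le_mul_of_nonneg_right h1 (by positivity)
      _ = 1/(n:ℚ) := by field_simp
      _ ≤ 1/2 := by
          rw [div_le_div_iff₀ hnpos (by norm_num)]
          linarith
  have hbern : (1:ℚ) - F.card * (2*c) ≤ (1 - 2*c)^F.card := by
    have h := one_add_mul_le_pow (show (-2:ℚ) ≤ -(2*c) by linarith) F.card
    have h2 : ((1:ℚ) + -(2*c)) = 1 - 2*c := by ring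
    rw [h2] at h
    linarith
  have hpow_pos : (0:ℚ) < (1 - 2*c)^F.card := pow_pos h2cpos _
  rw [div_pow, one_pow, div_le_iff₀ hpow_pos]
  nlinarith

/-- Coefficientwise map to `Fdh`. -/
def mapQ (x : KQ n) : KK n := x.map (Rat.castHom Fdh)

lemma mapQ_coeff (x : KQ n) (γ : Gam n) : (mapQ x).coeff γ = ((x.coeff γ : ℚ) : Fdh) := rfl

/-- The coefficientwise ring homomorphism `KQ n →+* KK n`. -/
def ΨR (n : ℕ) : KQ n →+* KK n where
  toFun := mapQ
  map_zero' := by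
    ext γ
    rw [mapQ_coeff, HahnSeries.coeff_zero, HahnSeries.coeff_zero, Rat.cast_zero]
  map_one' := by
    ext γ
    rw [mapQ_coeff, HahnSeries.coeff_one, HahnSeries.coeff_one]
    split_ifs <;> simp
  map_add' x y := by
    ext γ
    rw [HahnSeries.coeff_add]
    rw [show (mapQ (x + y)).coeff γ = _ from mapQ_coeff _ γ,
      show (mapQ x).coeff γ = _ from mapQ_coeff _ γ,
      show (mapQ y).coeff γ = _ from mapQ_coeff _ γ, HahnSeries.coeff_add]
    push_cast
    ring
  map_mul' x y := by
    have h := HahnSeries.map_mul (R := ℚ) (S := Fdh)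
      ((Rat.castHom Fdh) : ℚ →ₙ+* Fdh) (x := x) (y := y)
    exact h

lemma ΨR_coeff (x : KQ n) (γ : Gam n) : (ΨR n x).coeff γ = ((x.coeff γ : ℚ) : Fdh) := rfl

lemma ΨR_single (γ : Gam n) (q : ℚ) :
    ΨR n (HahnSeries.single γ q) = HahnSeries.single γ (q : Fdh) := by
  ext g
  rw [ΨR_coeff, HahnSeries.coeff_single, HahnSeries.coeff_single]
  split_ifs <;> simp

lemma ΨR_zqv (j : Fin n) : ΨR n (zqv j) = zv j := by
  rw [zqv, ΨR_single, Rat.cast_one]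
  rfl

set_option synthInstance.maxHeartbeats 1000000
set_option maxHeartbeats 1000000

lemma ΨR_zSq (s t : ℕ) : ΨR n (zSq n s t) = zS n s t := by
  rw [zSq, zS, map_sum]
  exact Finset.sum_congr rfl fun j _ => ΨR_zqv j

lemma ΨR_A1q : ΨR n (A1q n) = A1 n := by
  rw [A1q, A1, map_prod]
  refine Finset.prod_congr rfl fun p hp => ?_
  rw [map_div₀, map_sub, ΨR_zSq, ΨR_zSq, ΨR_zqv]

end A1Aux
/-- **Lemma 5.7, `A¹` part**: for `i ∈ ℤ^n` with `Σi = 0`, the coefficient of `z^i` in `A¹`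
is a rational number of absolute value at most `n^{3·D(i)}`. -/
theorem coefficient_of_A1_bound (n : ℕ) (hn : 2 ≤ n) (i : Fin n → ℤ) (hs : Sig i = 0) :
    ∃ q : ℚ, zcoeff i (A1 n) = (q : Fdh) ∧ |q| ≤ (n : ℚ) ^ (3 * Dfk i) := by
  classical
  have hGd := A1Aux.Gd_A1q n hn
  have hn2 : (2:ℚ) ≤ (n:ℚ) := by exact_mod_cast hn
  have hnpos : (0:ℚ) < n := by linarith
  refine ⟨(A1Aux.A1q n).coeff (gamOf i), ?_, ?_⟩
  · rw [zcoeff, ← A1Aux.ΨR_A1q]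
    rfl
  · have hD : A1Aux.Dg n (gamOf i) = Dfk i := A1Aux.Dg_gamOf i
    rcases eq_or_ne (gamOf i) 0 with h0 | h0
    · rw [h0, hGd.czero]
      have hD0 : Dfk i = 0 := by rw [← hD, h0, A1Aux.Dg_zero]
      rw [hD0]
      norm_num
    · rcases le_or_gt (Dfk i) 0 with hneg | hpos
      · rw [hGd.low _ h0 (by rw [hD]; exact hneg), abs_zero]
        exact le_of_lt (zpow_pos hnpos _)
      · have hS := hGd.phi ({0, gamOf i} : Finset (Gam n))
        rw [A1Aux.Phi, Finset.sum_pair (Ne.symm h0), hGd.czero, A1Aux.Dg_zero] at hS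
        norm_num at hS
        -- hS : 1 + |q| * c ^ toNat ≤ 2  (roughly)
        have hq : |(A1Aux.A1q n).coeff (gamOf i)|
            * ((((n:ℚ)^3)) ^ (A1Aux.Dg n (gamOf i)).toNat)⁻¹ ≤ 1 := by linarith
        have htn : ((A1Aux.Dg n (gamOf i)).toNat : ℤ) = Dfk i := by
          rw [hD]
          exact Int.toNat_of_nonneg hpos.le
        have hcpow : ((((n:ℚ)^3)) ^ (A1Aux.Dg n (gamOf i)).toNat)⁻¹
            = ((n:ℚ) ^ (3 * Dfk i))⁻¹ := by
          rw [← pow_mul]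
          congr 1
          rw [← zpow_natCast]
          congr 1
          push_cast
          omega
        rw [hcpow] at hq
        have hX : (0:ℚ) < (n:ℚ) ^ (3 * Dfk i) := zpow_pos hnpos _
        calc |(A1Aux.A1q n).coeff (gamOf i)|
            = |(A1Aux.A1q n).coeff (gamOf i)| * ((n:ℚ) ^ (3 * Dfk i))⁻¹
              * (n:ℚ) ^ (3 * Dfk i) := by field_simp
          _ ≤ 1 * (n:ℚ) ^ (3 * Dfk i) := mul_le_mul_of_nonneg_right hq hX.le
          _ = (n:ℚ) ^ (3 * Dfk i) := one_mul _

end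
end

section
/- For any rational numbers a_1, …, a_n and δ, the coefficient of (z_1⋯z_n)^{−1} in A·B (an element of ℚ(d,h)) equals h^n · p(d) for a unique polynomial p ∈ ℚ[d] of degree at most n. -/
noncomputable section
open scoped Classical

/- ### Auxiliary development: a bigraded degree calculus on `K_F`.

We track, for each Hahn exponent, that the coefficient is a polynomial in `d·h` and `h`
which is homogeneous of the appropriate degree when `h` and the `z_j` all get weight `1`
and `d` gets weight `0`.  Since `d` only ever occurs in the combination `d·h`, the
coefficient of `(z_1⋯z_n)^{-1}` is then forced to be `h^n` times a polynomial in `d`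
of degree at most `n`. -/

/-- `memP k x` : `x ∈ ℚ(d,h)` has the form `h^k·p(d)` with `p` of degree at most `k`
(and `x = 0` if `k < 0`). -/
def memP (k : ℤ) (x : Fdh) : Prop :=
  (k < 0 → x = 0) ∧
    ∃ p : Polynomial ℚ, p.natDegree ≤ k.toNat ∧ x = hvar ^ k.toNat * Polynomial.aeval dvar p

lemma memP_zero (k : ℤ) : memP k 0 := ⟨fun _ => rfl, 0, by simp, by simp⟩

lemma memP_add {k : ℤ} {x y : Fdh} (hx : memP k x) (hy : memP k y) : memP k (x + y) := by
  obtain ⟨hx0, p, hp, hpe⟩ := hx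
  obtain ⟨hy0, q, hq, hqe⟩ := hy
  refine ⟨fun h => by rw [hx0 h, hy0 h, add_zero], p + q,
    le_trans (Polynomial.natDegree_add_le p q) (max_le hp hq), ?_⟩
  rw [hpe, hqe, map_add]; ring

lemma memP_neg {k : ℤ} {x : Fdh} (hx : memP k x) : memP k (-x) := by
  obtain ⟨hx0, p, hp, hpe⟩ := hx
  exact ⟨fun h => by rw [hx0 h, neg_zero], -p, by simpa using hp, by rw [hpe, map_neg]; ring⟩

lemma memP_sub {k : ℤ} {x y : Fdh} (hx : memP k x) (hy : memP k y) : memP k (x - y) := by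
  rw [sub_eq_add_neg]; exact memP_add hx (memP_neg hy)

lemma memP_sum {ι : Type*} {k : ℤ} (s : Finset ι) (f : ι → Fdh)
    (h : ∀ i ∈ s, memP k (f i)) : memP k (∑ i ∈ s, f i) := by
  classical
  induction s using Finset.cons_induction with
  | empty => simpa using memP_zero k
  | cons a s ha ih =>
    rw [Finset.sum_cons]
    exact memP_add (h a (Finset.mem_cons_self a s)) (ih fun i hi => h i (Finset.mem_cons_of_mem hi))

lemma memP_mul {a b : ℤ} {x y : Fdh} (hx : memP a x) (hy : memP b y) : memP (a + b) (x * y) := by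
  rcases lt_or_ge a 0 with ha | ha
  · rw [hx.1 ha, zero_mul]; exact memP_zero _
  rcases lt_or_ge b 0 with hb | hb
  · rw [hy.1 hb, mul_zero]; exact memP_zero _
  obtain ⟨-, p, hp, hpe⟩ := hx
  obtain ⟨-, q, hq, hqe⟩ := hy
  refine ⟨fun h => absurd h (by omega), p * q, ?_, ?_⟩
  · refine le_trans Polynomial.natDegree_mul_le ?_
    omega
  · rw [hpe, hqe, map_mul, show (a + b).toNat = a.toNat + b.toNat by omega, pow_add]; ring

lemma memP_one : memP 0 1 := ⟨fun h => absurd h (by norm_num), 1, by simp, by simp⟩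

lemma memP_ratQ (c : ℚ) : memP 0 ((c : Fdh)) := by
  refine ⟨fun h => absurd h (by norm_num), Polynomial.C c, by simp, ?_⟩
  simp only [Int.toNat_zero, pow_zero, one_mul, Polynomial.aeval_C]
  exact (eq_ratCast (algebraMap ℚ Fdh) c).symm

lemma memP_hvar : memP 1 hvar :=
  ⟨fun h => absurd h (by norm_num), 1, by simp, by simp⟩

lemma memP_dh : memP 1 (dvar * hvar) := by
  refine ⟨fun h => absurd h (by norm_num), Polynomial.X, by simp, ?_⟩
  rw [Polynomial.aeval_X, show (1 : ℤ).toNat = 1 from rfl, pow_one]; ring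

lemma memP_finsum {ι : Type} {k : ℤ} (f : ι → Fdh) (h : ∀ i, memP k (f i)) :
    memP k (∑ᶠ i, f i) := by
  by_cases hf : (Function.support f).Finite
  · rw [finsum_eq_sum f hf]; exact memP_sum _ _ fun i _ => h i
  · rw [finsum_of_infinite_support hf]; exact memP_zero _

/-- The total `z`-degree attached to a Hahn exponent (negated, since large monomials have
small Hahn exponents). -/
def sSum {n : ℕ} (γ : Gam n) : ℤ := ∑ k, ofLex γ k

lemma sSum_add {n : ℕ} (γ₁ γ₂ : Gam n) : sSum (γ₁ + γ₂) = sSum γ₁ + sSum γ₂ := by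
  unfold sSum; rw [← Finset.sum_add_distrib]; rfl

lemma sSum_neg {n : ℕ} (γ : Gam n) : sSum (-γ) = -sSum γ := by
  unfold sSum; rw [← Finset.sum_neg_distrib]; rfl

lemma sSum_zero {n : ℕ} : sSum (0 : Gam n) = 0 := Finset.sum_const_zero

lemma sSum_gamOf {n : ℕ} (i : Fin n → ℤ) : sSum (gamOf i) = -∑ k, i k := by
  unfold sSum gamOf
  have h2 : ∑ k : Fin n, i k.rev = ∑ k, i k :=
    Fintype.sum_bijective Fin.rev Fin.rev_involutive.bijective _ _ fun k => rfl
  calc (∑ k : Fin n, -(i k.rev)) = -∑ k : Fin n, i k.rev := Finset.sum_neg_distrib _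
    _ = -∑ k, i k := by rw [h2]

/-- `memM n D x` : every coefficient of the iterated Laurent series `x` is a polynomial
in `d·h` and `h`, homogeneous of total degree `D` when the `z_j` and `h` have weight 1. -/
def memM (n : ℕ) (D : ℤ) (x : KK n) : Prop := ∀ γ : Gam n, memP (D + sSum γ) (x.coeff γ)

lemma memM_congr {n : ℕ} {D D' : ℤ} {x : KK n} (h : D = D') (hx : memM n D x) : memM n D' x :=
  h ▸ hx

lemma memM_zero (n : ℕ) (D : ℤ) : memM n D 0 := fun γ => by
  rw [HahnSeries.coeff_zero]; exact memP_zero _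

lemma memM_add {n : ℕ} {D : ℤ} {x y : KK n} (hx : memM n D x) (hy : memM n D y) :
    memM n D (x + y) := fun γ => by
  rw [HahnSeries.coeff_add]; exact memP_add (hx γ) (hy γ)

lemma memM_neg {n : ℕ} {D : ℤ} {x : KK n} (hx : memM n D x) : memM n D (-x) := fun γ => by
  rw [HahnSeries.coeff_neg]; exact memP_neg (hx γ)

lemma memM_sub {n : ℕ} {D : ℤ} {x y : KK n} (hx : memM n D x) (hy : memM n D y) :
    memM n D (x - y) := by
  rw [sub_eq_add_neg]; exact memM_add hx (memM_neg hy)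

lemma memM_sum {n : ℕ} {ι : Type*} {D : ℤ} (s : Finset ι) (f : ι → KK n)
    (h : ∀ i ∈ s, memM n D (f i)) : memM n D (∑ i ∈ s, f i) := by
  classical
  induction s using Finset.cons_induction with
  | empty => simpa using memM_zero n D
  | cons a s ha ih =>
    rw [Finset.sum_cons]
    exact memM_add (h a (Finset.mem_cons_self a s)) (ih fun i hi => h i (Finset.mem_cons_of_mem hi))

lemma memM_single {n : ℕ} {D : ℤ} {γ0 : Gam n} {c : Fdh} (h : memP (D + sSum γ0) c) :
    memM n D (HahnSeries.single γ0 c) := by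
  intro γ
  rcases eq_or_ne γ γ0 with rfl | hne
  · rwa [HahnSeries.coeff_single_same]
  · rw [HahnSeries.coeff_single_of_ne hne]; exact memP_zero _

lemma memM_one (n : ℕ) : memM n 0 1 := by
  rw [← HahnSeries.single_zero_one]
  exact memM_single (by rw [sSum_zero]; exact memP_one)

lemma memM_mul {n : ℕ} {a b : ℤ} {x y : KK n} (hx : memM n a x) (hy : memM n b y) :
    memM n (a + b) (x * y) := by
  intro γ
  rw [HahnSeries.coeff_mul]
  refine memP_sum _ _ ?_
  intro ij hij
  obtain ⟨-, -, hsum⟩ := Finset.mem_addAntidiagonal.mp hij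
  have h := memP_mul (hx ij.1) (hy ij.2)
  have he : a + sSum ij.1 + (b + sSum ij.2) = a + b + sSum γ := by
    rw [← hsum, sSum_add]; ring
  rwa [he] at h

lemma memM_prod {n : ℕ} {ι : Type*} (s : Finset ι) (d : ι → ℤ) (f : ι → KK n)
    (h : ∀ i ∈ s, memM n (d i) (f i)) : memM n (∑ i ∈ s, d i) (∏ i ∈ s, f i) := by
  classical
  induction s using Finset.cons_induction with
  | empty => simpa using memM_one n
  | cons a s ha ih =>
    rw [Finset.sum_cons, Finset.prod_cons]
    exact memM_mul (h a (Finset.mem_cons_self a s)) (ih fun i hi => h i (Finset.mem_cons_of_mem hi))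

lemma memM_pow {n : ℕ} {D : ℤ} {x : KK n} (k : ℕ) (h : memM n D x) :
    memM n ((k : ℤ) * D) (x ^ k) := by
  induction k with
  | zero => simpa using memM_one n
  | succ k ih =>
    have hD : ((k + 1 : ℕ) : ℤ) * D = (k : ℤ) * D + D := by push_cast; ring
    rw [hD, pow_succ]
    exact memM_mul ih h

lemma orderTop_pos {n : ℕ} {x : KK n} (h : ∀ γ : Gam n, γ ≤ 0 → x.coeff γ = 0) :
    0 < x.orderTop := by
  rcases eq_or_ne x 0 with rfl | hx
  · rw [HahnSeries.orderTop_zero]; exact WithTop.top_pos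
  · rw [HahnSeries.zero_lt_orderTop_iff hx]
    by_contra hle
    push_neg at hle
    exact mt HahnSeries.coeff_order_eq_zero.mp hx (h _ hle)

/-- The key inversion lemma: the inverse of a series with leading coefficient `1` at the
Hahn exponent `γ0`, homogeneous of degree `-sSum γ0`, is homogeneous of degree `sSum γ0`. -/
lemma memM_inv {n : ℕ} {γ0 : Gam n} {x : KK n}
    (hx : memM n (-sSum γ0) x) (h1 : x.coeff γ0 = 1)
    (hs : ∀ γ : Gam n, γ < γ0 → x.coeff γ = 0) :
    memM n (sSum γ0) x⁻¹ := by
  set w : KK n := HahnSeries.single (-γ0) 1 * x - 1 with hwdef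
  have hmono : memM n (sSum γ0) (HahnSeries.single (-γ0) (1 : Fdh)) :=
    memM_single (by rw [sSum_neg, add_neg_cancel]; exact memP_one)
  have hw_coeff : ∀ γ : Gam n, w.coeff γ = x.coeff (γ + γ0) - (1 : KK n).coeff γ := by
    intro γ
    have hγ : γ = (γ + γ0) + (-γ0) := by rw [add_assoc, add_neg_cancel, add_zero]
    rw [hwdef, HahnSeries.coeff_sub]
    congr 1
    calc (HahnSeries.single (-γ0) (1 : Fdh) * x).coeff γ
        = (HahnSeries.single (-γ0) (1 : Fdh) * x).coeff ((γ + γ0) + (-γ0)) := by rw [← hγ]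
      _ = 1 * x.coeff (γ + γ0) := HahnSeries.coeff_single_mul_add
      _ = x.coeff (γ + γ0) := one_mul _
  have hwneg : ∀ γ : Gam n, γ ≤ 0 → w.coeff γ = 0 := by
    intro γ hγ
    rcases eq_or_lt_of_le hγ with rfl | hlt
    · rw [hw_coeff, zero_add, h1, HahnSeries.coeff_one, if_pos rfl, sub_self]
    · have hx0 : x.coeff (γ + γ0) = 0 := hs _ (by have h' := add_lt_add_of_lt_of_le hlt (le_refl γ0); rwa [zero_add] at h')
      rw [hw_coeff, hx0, HahnSeries.coeff_one, if_neg (ne_of_lt hlt), sub_zero]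
  have hwt : 0 < w.orderTop := orderTop_pos hwneg
  have hwm : memM n 0 w := by
    have h2 : memM n 0 (HahnSeries.single (-γ0) (1 : Fdh) * x) :=
      memM_congr (add_neg_cancel _) (memM_mul hmono hx)
    exact memM_sub h2 (memM_one n)
  have hot : 0 < (-w).orderTop := by rw [HahnSeries.orderTop_neg]; exact hwt
  have hmwk : ∀ k : ℕ, memM n 0 ((-w) ^ k) := fun k => by
    simpa using memM_pow k (memM_neg hwm)
  have hss : HahnSeries.single γ0 (1 : Fdh) * HahnSeries.single (-γ0) (1 : Fdh) = 1 := by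
    rw [HahnSeries.single_mul_single, add_neg_cancel, mul_one, HahnSeries.single_zero_one]
  have hfact : x = HahnSeries.single γ0 1 * (1 + w) := by
    calc x = (HahnSeries.single γ0 (1 : Fdh) * HahnSeries.single (-γ0) (1 : Fdh)) * x := by
            rw [hss, one_mul]
      _ = HahnSeries.single γ0 1 * (1 + w) := by rw [hwdef]; ring
  have hinv1 : ((1 : KK n) + w)⁻¹ = (HahnSeries.SummableFamily.powers (-w)).hsum := by
    apply inv_eq_of_mul_eq_one_right
    have hsne : (1 : KK n) + w = 1 - (-w) := by ring
    rw [hsne]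
    exact HahnSeries.SummableFamily.one_sub_self_mul_hsum_powers hot
  have hhm : memM n 0 ((HahnSeries.SummableFamily.powers (-w)).hsum) := by
    intro γ
    rw [HahnSeries.SummableFamily.coeff_hsum]
    exact memP_finsum _ fun k => by
      rw [HahnSeries.SummableFamily.powers_of_orderTop_pos hot]; exact hmwk k γ
  have hxinv : x⁻¹ = HahnSeries.single (-γ0) 1 * (1 + w)⁻¹ := by
    rw [hfact, mul_inv]
    congr 1
    exact inv_eq_of_mul_eq_one_right hss
  rw [hxinv, hinv1]
  simpa using memM_mul hmono hhm

/- ### Lexicographic facts about the exponents of the `z_j` -/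

lemma lex_lt' {n : ℕ} {γ γ' : Gam n} (k : Fin n) (h1 : ∀ m, m < k → ofLex γ m = ofLex γ' m)
    (h2 : ofLex γ k < ofLex γ' k) : γ < γ' :=
  ⟨k, h1, h2⟩

lemma ofLex_gamOf_single {n : ℕ} (j k : Fin n) :
    ofLex (gamOf (Pi.single j (1 : ℤ))) k = if k = j.rev then -1 else 0 := by
  unfold gamOf
  rw [ofLex_toLex]
  show -((Pi.single j (1 : ℤ) : Fin n → ℤ) k.rev) = if k = j.rev then -1 else 0
  rcases eq_or_ne k j.rev with rfl | hne
  · rw [if_pos rfl, Fin.rev_rev, Pi.single_eq_same]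
  · have hkr : k.rev ≠ j := fun h => hne (by rw [← h, Fin.rev_rev])
    rw [if_neg hne, Pi.single_eq_of_ne hkr, neg_zero]

lemma gam_single_lt {n : ℕ} {j j' : Fin n} (h : j' < j) :
    gamOf (Pi.single j (1 : ℤ)) < gamOf (Pi.single j' (1 : ℤ)) := by
  have hrev : j.rev < j'.rev := Fin.rev_lt_rev.mpr h
  refine lex_lt' j.rev (fun m hm => ?_) ?_
  · rw [ofLex_gamOf_single, ofLex_gamOf_single, if_neg (ne_of_lt hm),
      if_neg (ne_of_lt (hm.trans hrev))]
  · rw [ofLex_gamOf_single, ofLex_gamOf_single, if_pos rfl, if_neg (ne_of_lt hrev)]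
    norm_num

lemma gam_single_neg {n : ℕ} (j : Fin n) : gamOf (Pi.single j (1 : ℤ)) < 0 := by
  refine lex_lt' j.rev (fun m hm => ?_) ?_
  · rw [ofLex_gamOf_single, if_neg (ne_of_lt hm)]; rfl
  · rw [ofLex_gamOf_single, if_pos rfl]
    show (-1 : ℤ) < 0
    norm_num

lemma gam_single_ne {n : ℕ} {j j' : Fin n} (h : j ≠ j') :
    gamOf (Pi.single j (1 : ℤ)) ≠ gamOf (Pi.single j' (1 : ℤ)) := by
  rcases lt_or_gt_of_ne h with hlt | hlt
  · exact ne_of_gt (gam_single_lt hlt)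
  · exact ne_of_lt (gam_single_lt hlt)

lemma sSum_gam_single {n : ℕ} (j : Fin n) : sSum (gamOf (Pi.single j (1 : ℤ))) = -1 := by
  rw [sSum_gamOf]
  simp [Pi.single_apply]

/- ### coefficients of the basic series -/

lemma coeff_sum {n : ℕ} {ι : Type*} (s : Finset ι) (f : ι → KK n) (γ : Gam n) :
    (∑ i ∈ s, f i).coeff γ = ∑ i ∈ s, (f i).coeff γ := by
  classical
  induction s using Finset.cons_induction with
  | empty => simp
  | cons a s ha ih => rw [Finset.sum_cons, Finset.sum_cons, HahnSeries.coeff_add, ih]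

lemma zS_coeff_single {n s t : ℕ} {j : Fin n} (hs : s ≤ j.val + 1) (ht : j.val + 1 ≤ t) :
    (zS n s t).coeff (gamOf (Pi.single j (1 : ℤ))) = 1 := by
  unfold zS
  rw [coeff_sum, Finset.sum_eq_single j]
  · exact HahnSeries.coeff_single_same _ _
  · intro b _ hbj
    exact HahnSeries.coeff_single_of_ne (gam_single_ne (Ne.symm hbj))
  · intro hj
    exact absurd (Finset.mem_filter.mpr ⟨Finset.mem_univ j, hs, ht⟩) hj

lemma zS_coeff_ne {n s t : ℕ} {γ : Gam n}
    (h : ∀ j : Fin n, j.val + 1 ≤ t → γ ≠ gamOf (Pi.single j (1 : ℤ))) :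
    (zS n s t).coeff γ = 0 := by
  unfold zS
  rw [coeff_sum]
  refine Finset.sum_eq_zero fun j hj => ?_
  obtain ⟨-, -, hjt⟩ := Finset.mem_filter.mp hj
  exact HahnSeries.coeff_single_of_ne (h j hjt)

lemma zv_coeff_same {n : ℕ} (j : Fin n) : (zv j).coeff (gamOf (Pi.single j (1 : ℤ))) = 1 :=
  HahnSeries.coeff_single_same _ _

lemma zv_coeff_ne {n : ℕ} {j : Fin n} {γ : Gam n} (h : γ ≠ gamOf (Pi.single j (1 : ℤ))) :
    (zv j).coeff γ = 0 :=
  HahnSeries.coeff_single_of_ne h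

/- ### membership of the atoms -/

lemma memM_zv {n : ℕ} (j : Fin n) : memM n 1 (zv j) :=
  memM_single (by rw [sSum_gam_single]; norm_num; exact memP_one)

lemma memM_zS (n s t : ℕ) : memM n 1 (zS n s t) :=
  memM_sum _ _ fun j _ => memM_zv j

lemma memM_C {n : ℕ} {k : ℤ} {v : Fdh} (hv : memP k v) : memM n k (HahnSeries.C v : KK n) := by
  rw [HahnSeries.C_apply]
  exact memM_single (by rw [sSum_zero, add_zero]; exact hv)

lemma memM_cQ {n : ℕ} (q : ℚ) : memM n 0 (cQ q) := memM_C (memP_ratQ q)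

/- ### the three kinds of denominators -/

lemma memM_inv_zv {n : ℕ} (j : Fin n) : memM n (-1) (zv j)⁻¹ := by
  have h := memM_inv (γ0 := gamOf (Pi.single j (1 : ℤ))) (x := zv j)
    (memM_congr (by rw [sSum_gam_single]; norm_num) (memM_zv j))
    (HahnSeries.coeff_single_same _ _)
    (fun γ hγ => HahnSeries.coeff_single_of_ne (ne_of_lt hγ))
  rwa [sSum_gam_single] at h

lemma memM_num0 {n : ℕ} (j : Fin n) {v : Fdh} (hv : memP 1 v) :
    memM n 1 (zS n 1 (j.val + 1) + HahnSeries.C v) :=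
  memM_add (memM_zS n _ _) (memM_C hv)

lemma memM_inv_den0 {n : ℕ} (j : Fin n) {v : Fdh} (hv : memP 1 v) :
    memM n (-1) (zS n 1 (j.val + 1) + HahnSeries.C v)⁻¹ := by
  have hne0 : ∀ γ : Gam n, γ < gamOf (Pi.single j (1 : ℤ)) → γ ≠ 0 :=
    fun γ hγ => ne_of_lt (hγ.trans (gam_single_neg j))
  have hcoe : (zS n 1 (j.val + 1) + HahnSeries.C v).coeff (gamOf (Pi.single j (1 : ℤ))) = 1 := by
    rw [HahnSeries.coeff_add, zS_coeff_single (by omega) le_rfl, HahnSeries.C_apply,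
      HahnSeries.coeff_single_of_ne (ne_of_lt (gam_single_neg j)), add_zero]
  have hlow : ∀ γ : Gam n, γ < gamOf (Pi.single j (1 : ℤ)) →
      (zS n 1 (j.val + 1) + HahnSeries.C v).coeff γ = 0 := by
    intro γ hγ
    rw [HahnSeries.coeff_add, HahnSeries.C_apply, HahnSeries.coeff_single_of_ne (hne0 γ hγ),
      add_zero]
    refine zS_coeff_ne fun j' hle => ?_
    have hv' : j'.val ≤ j.val := by omega
    rcases eq_or_lt_of_le hv' with heq | hlt'
    · have : j' = j := Fin.ext heq
      subst this
      exact ne_of_lt hγ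
    · exact ne_of_lt (hγ.trans (gam_single_lt (Fin.lt_def.mpr hlt')))
  have h := memM_inv (γ0 := gamOf (Pi.single j (1 : ℤ)))
    (memM_congr (by rw [sSum_gam_single]; norm_num) (memM_num0 j hv)) hcoe hlow
  rwa [sSum_gam_single] at h

lemma memM_inv_den1 {n : ℕ} {t1 t2 : Fin n} (h12 : t1 < t2) :
    memM n (-1) (zS n (t1.val + 2) (t2.val + 1) - zv t1)⁻¹ := by
  have h12' : t1.val < t2.val := Fin.lt_def.mp h12
  have hcoe : (zS n (t1.val + 2) (t2.val + 1) - zv t1).coeff (gamOf (Pi.single t2 (1 : ℤ)))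
      = 1 := by
    rw [HahnSeries.coeff_sub, zS_coeff_single (by omega) le_rfl,
      zv_coeff_ne (gam_single_ne (ne_of_gt h12)), sub_zero]
  have hlow : ∀ γ : Gam n, γ < gamOf (Pi.single t2 (1 : ℤ)) →
      (zS n (t1.val + 2) (t2.val + 1) - zv t1).coeff γ = 0 := by
    intro γ hγ
    have hzv : γ ≠ gamOf (Pi.single t1 (1 : ℤ)) :=
      ne_of_lt (hγ.trans (gam_single_lt h12))
    rw [HahnSeries.coeff_sub, zv_coeff_ne hzv, sub_zero]
    refine zS_coeff_ne fun j' hle => ?_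
    have hv' : j'.val ≤ t2.val := by omega
    rcases eq_or_lt_of_le hv' with heq | hlt'
    · have : j' = t2 := Fin.ext heq
      subst this
      exact ne_of_lt hγ
    · exact ne_of_lt (hγ.trans (gam_single_lt (Fin.lt_def.mpr hlt')))
  have h := memM_inv (γ0 := gamOf (Pi.single t2 (1 : ℤ)))
    (memM_congr (by rw [sSum_gam_single]; norm_num)
      (memM_sub (memM_zS n _ _) (memM_zv t1))) hcoe hlow
  rwa [sSum_gam_single] at h

/- ### membership of `A` and `B` -/

lemma memM_A0 (n : ℕ) : memM n 0 (A0 n) := by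
  unfold A0
  refine memM_congr (by simp) (memM_prod Finset.univ (fun _ => (0 : ℤ)) _ fun j _ => ?_)
  rw [div_eq_mul_inv]
  exact memM_congr (by norm_num) (memM_mul (memM_num0 j memP_dh) (memM_inv_zv j))

lemma memM_A1 (n : ℕ) : memM n 0 (A1 n) := by
  unfold A1
  refine memM_congr (by simp) (memM_prod _ (fun _ => (0 : ℤ)) _ fun p hp => ?_)
  have h12 : p.1 < p.2 := (Finset.mem_filter.mp hp).2
  rw [div_eq_mul_inv]
  exact memM_congr (by norm_num) (memM_mul (memM_zS n _ _) (memM_inv_den1 h12))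

lemma memM_A2 (n : ℕ) : memM n 0 (A2 n) := by
  unfold A2
  refine memM_congr (by simp) (memM_prod Finset.univ (fun _ => (0 : ℤ)) _ fun j _ => ?_)
  rw [div_eq_mul_inv]
  have hbase : memM n 0 (zv j * (zS n 1 (j.val + 1) + HahnSeries.C hvar)⁻¹) :=
    memM_congr (by norm_num) (memM_mul (memM_zv j) (memM_inv_den0 j memP_hvar))
  simpa using memM_pow (n + 2) hbase

lemma memM_linsum {n : ℕ} (a : Fin n → ℚ) : memM n 1 (∑ j, cQ (a j) * zv j) :=
  memM_sum _ _ fun j _ =>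
    memM_congr (zero_add 1) (memM_mul (memM_cQ (a j)) (memM_zv j))

lemma memM_Nnum (n : ℕ) (a : Fin n → ℚ) (δ : ℚ) :
    memM n (((n ^ 2 - 1 : ℕ) : ℤ) + 1) (Nnum n a δ) := by
  unfold Nnum
  have hlin1 : memM n 1 (∑ j, cQ (a j) * zv j + cQ (2 * absA a) * HahnSeries.C hvar) :=
    memM_add (memM_linsum a)
      (memM_congr (zero_add 1) (memM_mul (memM_cQ _) (memM_C memP_hvar)))
  have hlin2 : memM n 1 (∑ j, cQ (a j) * zv j + cQ (Snd n δ * absA a) * HahnSeries.C hvar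
      - cQ ((n : ℚ) ^ 2 * δ * absA a) * HahnSeries.C (dvar * hvar)) :=
    memM_sub
      (memM_add (memM_linsum a)
        (memM_congr (zero_add 1) (memM_mul (memM_cQ _) (memM_C memP_hvar))))
      (memM_congr (zero_add 1) (memM_mul (memM_cQ _) (memM_C memP_dh)))
  have hpow := memM_pow (n ^ 2 - 1) hlin1
  rw [mul_one] at hpow
  exact memM_mul hpow hlin2

lemma memM_BB (n : ℕ) (hn : 2 ≤ n) (a : Fin n → ℚ) (δ : ℚ) : memM n 0 (BB n a δ) := by
  have hprodinv : memM n ((n : ℤ) * (-(n : ℤ))) (((∏ j : Fin n, zv j) ^ n)⁻¹) := by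
    rw [← inv_pow, ← Finset.prod_inv_distrib]
    refine memM_pow n ?_
    refine memM_congr ?_ (memM_prod Finset.univ (fun _ => (-1 : ℤ)) _ fun j _ => memM_inv_zv j)
    simp
  unfold BB
  rw [div_eq_mul_inv]
  refine memM_congr ?_ (memM_mul (memM_Nnum n a δ) hprodinv)
  have h1 : (1 : ℕ) ≤ n ^ 2 := by nlinarith
  rw [Nat.cast_sub h1]
  push_cast
  ring

lemma memM_AB (n : ℕ) (hn : 2 ≤ n) (a : Fin n → ℚ) (δ : ℚ) :
    memM n 0 (AA n * BB n a δ) := by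
  have hA : memM n 0 (AA n) := by
    unfold AA
    exact memM_congr (by norm_num) (memM_mul (memM_mul (memM_A0 n) (memM_A1 n)) (memM_A2 n))
  exact memM_congr (by norm_num) (memM_mul hA (memM_BB n hn a δ))

/- ### injectivity facts for the final statement -/

lemma hvar_ne : hvar ≠ 0 := by
  intro h
  have hinj := IsFractionRing.injective (MvPolynomial (Fin 2) ℚ) Fdh
  have : (MvPolynomial.X 1 : MvPolynomial (Fin 2) ℚ) = 0 := hinj (by rw [map_zero]; exact h)
  exact MvPolynomial.X_ne_zero (R := ℚ) (σ := Fin 2) 1 this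

lemma aeval_dvar_inj : Function.Injective fun p : Polynomial ℚ => Polynomial.aeval dvar p := by
  intro p q h
  simp only at h
  set f := IsScalarTower.toAlgHom ℚ (MvPolynomial (Fin 2) ℚ) Fdh with hf
  have hfx : f (MvPolynomial.X 0) = dvar := rfl
  have hrw : ∀ r : Polynomial ℚ,
      Polynomial.aeval dvar r = f (Polynomial.aeval (MvPolynomial.X 0) r) := fun r => by
    rw [← Polynomial.aeval_algHom_apply, hfx]
  rw [hrw, hrw] at h
  have h2 : Polynomial.aeval (MvPolynomial.X 0 : MvPolynomial (Fin 2) ℚ) p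
      = Polynomial.aeval (MvPolynomial.X 0) q :=
    IsFractionRing.injective (MvPolynomial (Fin 2) ℚ) Fdh h
  set g : MvPolynomial (Fin 2) ℚ →ₐ[ℚ] Polynomial ℚ :=
    MvPolynomial.aeval (fun i : Fin 2 => if i = 0 then Polynomial.X else 0) with hg
  have h4 : ∀ r : Polynomial ℚ, g (Polynomial.aeval (MvPolynomial.X 0) r) = r := fun r => by
    rw [← Polynomial.aeval_algHom_apply]
    have : g (MvPolynomial.X 0) = Polynomial.X := by
      rw [hg, MvPolynomial.aeval_X]; simp
    rw [this, Polynomial.aeval_X_left_apply]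
  have h3 := congrArg g h2
  rwa [h4, h4] at h3

/-- **Section 5.1, structural claim**: for any rationals `a_1, …, a_n` and `δ`, the
coefficient of `(z_1⋯z_n)^{−1}` in `A·B` equals `h^n·p(d)` for a unique polynomial
`p ∈ ℚ[d]` of degree at most `n`. -/
theorem residue_is_polynomial_in_d (n : ℕ) (hn : 2 ≤ n) (a : Fin n → ℚ) (δ : ℚ) :
    ∃! p : Polynomial ℚ, p.natDegree ≤ n ∧
      zcoeff (fun _ => -1) (AA n * BB n a δ) = hvar ^ n * Polynomial.aeval dvar p := by
  have hM := memM_AB n hn a δ (gamOf (fun _ : Fin n => (-1 : ℤ)))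
  have hdeg0 : (0 : ℤ) + sSum (gamOf (fun _ : Fin n => (-1 : ℤ))) = (n : ℤ) := by
    rw [sSum_gamOf]; simp
  rw [hdeg0] at hM
  obtain ⟨-, p, hdeg, heq⟩ := hM
  have htn : ((n : ℤ)).toNat = n := Int.toNat_natCast n
  rw [htn] at hdeg heq
  have hz : zcoeff (fun _ => -1 : Fin n → ℤ) (AA n * BB n a δ)
      = (AA n * BB n a δ).coeff (gamOf (fun _ : Fin n => (-1 : ℤ))) := rfl
  refine ⟨p, ⟨hdeg, by rw [hz]; exact heq⟩, ?_⟩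
  rintro q ⟨hqdeg, hqe⟩
  apply aeval_dvar_inj
  have hq2 : hvar ^ n * Polynomial.aeval dvar q = hvar ^ n * Polynomial.aeval dvar p := by
    rw [← hqe, hz]; exact heq
  exact mul_left_cancel₀ (pow_ne_zero n hvar_ne) hq2

end
end

section
/- Let n ≥ 2 and a_t = n^{8(n+1−t)} for t = 1, …, n. For every i ∈ ℤ^n with Σi = 0 and i_t ≥ −n for all t: ( (n²)! / ∏_{t=1}^n (i_t + n)! ) · ∏_{t=1}^n a_t^{i_t + n} ≤ n^{8·D(i)} · ( (n²)! / (n!)^n ) · ∏_{t=1}^n a_t^n. -/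
noncomputable section
open scoped Classical

section Aux


lemma zpow_sum_aux {α : Type*} {x : ℚ} (hx : x ≠ 0) (s : Finset α) (f : α → ℤ) :
    x ^ (∑ a ∈ s, f a) = ∏ a ∈ s, x ^ f a := by
  classical
  induction s using Finset.induction_on with
  | empty => simp
  | insert a s h ih => rw [Finset.sum_insert h, Finset.prod_insert h, zpow_add₀ hx, ih]

lemma fac_le_fac_mul_pow {k n : ℕ} (hk : k ≤ n) : n.factorial ≤ k.factorial * n ^ (n - k) := by
  obtain ⟨d, rfl⟩ := Nat.exists_eq_add_of_le hk
  clear hk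
  induction d with
  | zero => simp
  | succ d ih =>
      rw [Nat.add_succ, Nat.factorial_succ]
      calc (k + d + 1) * (k + d).factorial
          ≤ (k + d + 1) * (k.factorial * (k + d) ^ (k + d - k)) := Nat.mul_le_mul_left _ ih
        _ ≤ (k + d + 1) * (k.factorial * (k + d + 1) ^ d) := by
            refine Nat.mul_le_mul_left _ (Nat.mul_le_mul_left _ ?_)
            simp only [Nat.add_sub_cancel_left]
            exact Nat.pow_le_pow_left (by omega) d
        _ = k.factorial * (k + d + 1) ^ (k + d + 1 - k) := by
            have h1 : k + d + 1 - k = d + 1 := by omega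
            rw [h1, pow_succ]; ring

lemma fac_zpow_le_fac {n k : ℕ} (hn : 1 ≤ n) :
    (n.factorial : ℚ) * (n : ℚ) ^ ((k : ℤ) - (n : ℤ)) ≤ (k.factorial : ℚ) := by
  have hn0 : (0 : ℚ) < (n : ℚ) := by exact_mod_cast hn
  rcases le_or_gt n k with h | h
  · have h1 : (k : ℤ) - (n : ℤ) = ((k - n : ℕ) : ℤ) := by omega
    rw [h1, zpow_natCast]
    exact_mod_cast Nat.factorial_mul_pow_sub_le_factorial h
  · have h1 : (k : ℤ) - (n : ℤ) = -(((n - k : ℕ) : ℤ)) := by omega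
    rw [h1, zpow_neg, zpow_natCast]
    rw [mul_inv_le_iff₀ (by positivity)]
    exact_mod_cast fac_le_fac_mul_pow h.le

end Aux

/-- **Inequality (5.11)**: for `a_t = n^{8(n+1−t)}` and `i ∈ ℤ^n` with `Σi = 0` and
`i_t ≥ −n` for all `t`,
`((n²)!/∏(i_t+n)!)·∏ a_t^{i_t+n} ≤ n^{8D(i)}·((n²)!/(n!)^n)·∏ a_t^n`. -/
theorem multinomial_coefficient_bound (n : ℕ) (hn : 2 ≤ n) (i : Fin n → ℤ)
    (hs : Sig i = 0) (hb : ∀ t, -(n : ℤ) ≤ i t) :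
    ((n ^ 2).factorial : ℚ) / (∏ t : Fin n, ((i t + n).toNat.factorial : ℚ))
        * ∏ t : Fin n, astd n t ^ (i t + (n : ℤ))
      ≤ (n : ℚ) ^ (8 * Dfk i) * (((n ^ 2).factorial : ℚ) / ((n.factorial : ℚ)) ^ n)
        * ∏ t : Fin n, astd n t ^ (n : ℤ) := by
  have hn0 : (0 : ℚ) < (n : ℚ) := by exact_mod_cast (by omega : 0 < n)
  have hnne : (n : ℚ) ≠ 0 := ne_of_gt hn0
  have hk : ∀ t : Fin n, (((i t + n).toNat : ℤ)) = i t + n := fun t =>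
    Int.toNat_of_nonneg (by linarith [hb t])
  have hcast : ∀ t : Fin n, ((8 * (n - t.val) : ℕ) : ℤ) = 8 * ((n : ℤ) - t.val) := by
    intro t
    have : t.val ≤ n := t.isLt.le
    push_cast [Nat.cast_sub this]
    ring
  -- astd values
  have hastd_ne : ∀ t : Fin n, astd n t ≠ 0 := fun t => by
    simp only [astd]; positivity
  -- the a-product identity
  have hA : (∏ t : Fin n, astd n t ^ (i t + (n : ℤ)))
      = (n : ℚ) ^ (8 * Dfk i) * ∏ t : Fin n, astd n t ^ (n : ℤ) := by
    have h1 : ∀ t : Fin n, astd n t ^ (i t + (n : ℤ))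
        = astd n t ^ (i t) * astd n t ^ ((n : ℤ)) := fun t =>
      zpow_add₀ (hastd_ne t) _ _
    rw [Finset.prod_congr rfl (fun t _ => h1 t), Finset.prod_mul_distrib]
    congr 1
    have h2 : ∀ t : Fin n, astd n t ^ (i t)
        = (n : ℚ) ^ ((8 * ((n : ℤ) - t.val)) * i t) := by
      intro t
      rw [astd, ← zpow_natCast ((n:ℚ)) (8 * (n - t.val)), ← zpow_mul, hcast t]
    rw [Finset.prod_congr rfl (fun t _ => h2 t), ← zpow_sum_aux hnne]
    congr 1
    rw [Dfk, Finset.mul_sum]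
    exact Finset.sum_congr rfl fun t _ => by ring
  -- the factorial bound
  have hP : ((n.factorial : ℚ)) ^ n ≤ ∏ t : Fin n, ((i t + n).toNat.factorial : ℚ) := by
    have h3 : ((n.factorial : ℚ)) ^ n
        = ∏ t : Fin n, ((n.factorial : ℚ) * (n : ℚ) ^ (i t)) := by
      rw [Finset.prod_mul_distrib, Finset.prod_const, ← zpow_sum_aux hnne]
      have : (∑ t : Fin n, i t) = 0 := hs
      rw [this, zpow_zero, mul_one, Finset.card_univ, Fintype.card_fin]
    rw [h3]
    refine Finset.prod_le_prod (fun t _ => by positivity) (fun t _ => ?_)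
    have := fac_zpow_le_fac (n := n) (k := (i t + n).toNat) (by omega)
    rwa [hk t, add_sub_cancel_right] at this
  -- positivity facts
  have hPpos : (0 : ℚ) < ∏ t : Fin n, ((i t + n).toNat.factorial : ℚ) := by
    refine Finset.prod_pos fun t _ => ?_
    exact_mod_cast (i t + n).toNat.factorial_pos
  have hnfpos : (0 : ℚ) < ((n.factorial : ℚ)) ^ n := by
    have : (0:ℚ) < (n.factorial : ℚ) := by exact_mod_cast n.factorial_pos
    positivity
  have hCpos : (0 : ℚ) < (n : ℚ) ^ (8 * Dfk i) := zpow_pos hn0 _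
  have hapos : ∀ t : Fin n, 0 < astd n t := fun t => by
    simp only [astd]; positivity
  have hBpos : (0 : ℚ) ≤ ∏ t : Fin n, astd n t ^ ((n : ℤ)) :=
    Finset.prod_nonneg fun t _ => le_of_lt (zpow_pos (hapos t) _)
  have hdiv : ((n ^ 2).factorial : ℚ) / (∏ t : Fin n, ((i t + n).toNat.factorial : ℚ))
      ≤ ((n ^ 2).factorial : ℚ) / ((n.factorial : ℚ)) ^ n := by
    apply div_le_div_of_nonneg_left _ hnfpos hP
    positivity
  calc ((n ^ 2).factorial : ℚ) / (∏ t : Fin n, ((i t + n).toNat.factorial : ℚ))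
        * ∏ t : Fin n, astd n t ^ (i t + (n : ℤ))
      = ((n ^ 2).factorial : ℚ) / (∏ t : Fin n, ((i t + n).toNat.factorial : ℚ))
        * ((n : ℚ) ^ (8 * Dfk i) * ∏ t : Fin n, astd n t ^ ((n : ℤ))) := by rw [hA]
    _ ≤ ((n ^ 2).factorial : ℚ) / ((n.factorial : ℚ)) ^ n
        * ((n : ℚ) ^ (8 * Dfk i) * ∏ t : Fin n, astd n t ^ ((n : ℤ))) := by
        refine mul_le_mul_of_nonneg_right hdiv ?_
        positivity
    _ = (n : ℚ) ^ (8 * Dfk i) * (((n ^ 2).factorial : ℚ) / ((n.factorial : ℚ)) ^ n)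
        * ∏ t : Fin n, astd n t ^ ((n : ℤ)) := by ring


end
end

section
/- Let n ≥ 2, 1 ≤ l ≤ n, a_t = n^{8(n+1−t)} for t = 1, …, n, δ = 1/(2·n^{8n}), |a| = a_1+⋯+a_n, and S_{n,δ} = 2 − 2n² + n²(n+2)δ. Let C_l = [ (n²)!/( l!·((n−1)!)^l·(n!)^{n−l} ) + (S_{n,δ}/2 − 1)·(n²−1)!/( (l−1)!·((n−1)!)^l·(n!)^{n−l} ) ] · (2|a|)^l · ∏_{t=1}^{n−l} a_t^n · ∏_{t=n−l+1}^{n} a_t^{n−1} (this is the coefficient of z_1^n⋯z_{n−l}^n·z_{n−l+1}^{n−1}⋯z_n^{n−1}·h^l·d^0 in the polynomial N = (a_1z_1+⋯+a_nz_n+2|a|h)^{n²−1}·(a_1z_1+⋯+a_nz_n+S_{n,δ}|a|h−n²δ|a|dh)). Then |C_l| < n^{8ln} · (a_1⋯a_n)^n · (n²)!/(n!)^n. -/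
noncomputable section
open scoped Classical

set_option maxHeartbeats 1600000 in
/-- **Inequality (5.24)**: the bound `|C_l| < n^{8ln}·(a_1⋯a_n)^n·(n²)!/(n!)^n` on the
dominant coefficient
`C_l = [ (n²)!/(l!((n−1)!)^l(n!)^{n−l}) + (S_{n,δ}/2 − 1)·(n²−1)!/((l−1)!((n−1)!)^l(n!)^{n−l}) ]
· (2|a|)^l · ∏_{t=1}^{n−l} a_t^n · ∏_{t=n−l+1}^{n} a_t^{n−1}`. -/
theorem dominant_coefficient_bound (n : ℕ) (hn : 2 ≤ n) (l : ℕ) (hl1 : 1 ≤ l) (hln : l ≤ n) :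
    |(((n ^ 2).factorial : ℚ)
          / ((l.factorial : ℚ) * ((n - 1).factorial : ℚ) ^ l * (n.factorial : ℚ) ^ (n - l))
        + (Snd n (δstd n) / 2 - 1) * ((n ^ 2 - 1).factorial : ℚ)
          / (((l - 1).factorial : ℚ) * ((n - 1).factorial : ℚ) ^ l
              * (n.factorial : ℚ) ^ (n - l)))
      * (2 * absA (astd n)) ^ l
      * ∏ t : Fin n, astd n t ^ (if t.val + 1 ≤ n - l then n else n - 1)|
    < (n : ℚ) ^ (8 * l * n) * (∏ t : Fin n, astd n t) ^ n * ((n ^ 2).factorial : ℚ)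
        / ((n.factorial : ℚ)) ^ n := by
  have hq2 : (2:ℚ) ≤ (n:ℚ) := by exact_mod_cast hn
  have hq0 : (0:ℚ) < (n:ℚ) := by linarith
  have hq1 : (1:ℚ) ≤ (n:ℚ) := by linarith
  have hq1' : (1:ℚ) < (n:ℚ) := by linarith
  -- notation
  set F : ℚ := ((n ^ 2).factorial : ℚ) with hF
  set F' : ℚ := ((n ^ 2 - 1).factorial : ℚ) with hF'
  set fac1 : ℚ := ((n - 1).factorial : ℚ) with hfac1
  set facn : ℚ := (n.factorial : ℚ) with hfacn
  have hF0 : 0 < F := by rw [hF]; exact_mod_cast Nat.factorial_pos _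
  have hF'0 : 0 < F' := by rw [hF']; exact_mod_cast Nat.factorial_pos _
  have hfac10 : (0:ℚ) < fac1 := by rw [hfac1]; exact_mod_cast Nat.factorial_pos _
  have hfacn0 : (0:ℚ) < facn := by rw [hfacn]; exact_mod_cast Nat.factorial_pos _
  have hlf1 : (1:ℚ) ≤ (l.factorial : ℚ) := by exact_mod_cast Nat.factorial_pos l
  have hlf1' : (1:ℚ) ≤ ((l-1).factorial : ℚ) := by exact_mod_cast Nat.factorial_pos (l-1)
  set D : ℚ := fac1 ^ l * facn ^ (n - l) with hD
  have hD0 : 0 < D := by positivity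
  -- n! = n * (n-1)!
  have hnf : facn = (n:ℚ) * fac1 := by
    have h := Nat.factorial_succ (n-1)
    rw [show n - 1 + 1 = n by omega] at h
    rw [hfacn, hfac1, h]; push_cast; ring
  -- n^2 * (n^2-1)! = (n^2)!
  have hq2F' : (n:ℚ)^2 * F' = F := by
    have h4 : 1 ≤ n^2 := by nlinarith
    have h := Nat.factorial_succ (n^2-1)
    rw [show n^2 - 1 + 1 = n^2 by omega] at h
    rw [hF, hF', h]; push_cast; ring
  -- (n!)^n = n^l * fac1^l * facn^(n-l)
  have hfacpow : facn ^ n = (n:ℚ)^l * D := by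
    calc facn ^ n = facn ^ (l + (n - l)) := by congr 1; omega
      _ = facn ^ l * facn ^ (n - l) := pow_add _ _ _
      _ = ((n:ℚ) * fac1) ^ l * facn ^ (n - l) := by rw [hnf]
      _ = (n:ℚ)^l * D := by rw [mul_pow, hD]; ring
  -- bound on |Snd/2 - 1|
  have ht : (n:ℚ) ≤ (n:ℚ)^(8*n) := by
    calc (n:ℚ) = (n:ℚ)^1 := (pow_one _).symm
      _ ≤ (n:ℚ)^(8*n) := pow_le_pow_right₀ hq1 (by omega)
  have ht0 : (0:ℚ) < (n:ℚ)^(8*n) := pow_pos hq0 _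
  have hceq : Snd n (δstd n)/2 - 1 = -(n:ℚ)^2 + (n:ℚ)^2*((n:ℚ)+2)/(4*(n:ℚ)^(8*n)) := by
    simp only [Snd, δstd]; field_simp; ring
  have hc : |Snd n (δstd n)/2 - 1| ≤ (n:ℚ)^2 := by
    rw [hceq, abs_le]
    constructor
    · have : (0:ℚ) ≤ (n:ℚ)^2*((n:ℚ)+2)/(4*(n:ℚ)^(8*n)) := by positivity
      linarith
    · have h2 : (n:ℚ) + 2 ≤ 8*(n:ℚ)^(8*n) := by nlinarith
      have h1 : (n:ℚ)^2*((n:ℚ)+2)/(4*(n:ℚ)^(8*n)) ≤ 2*(n:ℚ)^2 := by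
        rw [div_le_iff₀ (by positivity)]
        nlinarith [mul_le_mul_of_nonneg_left h2 (sq_nonneg (n:ℚ))]
      linarith
  -- bound on the coefficient
  set X : ℚ := F / ((l.factorial : ℚ) * fac1 ^ l * facn ^ (n - l))
        + (Snd n (δstd n) / 2 - 1) * F' / (((l - 1).factorial : ℚ) * fac1 ^ l * facn ^ (n - l))
    with hX
  have hXb : |X| ≤ 2 * F / D := by
    have hb1 : |F / ((l.factorial : ℚ) * fac1 ^ l * facn ^ (n - l))| ≤ F / D := by
      rw [abs_of_nonneg (by positivity)]
      apply div_le_div_of_nonneg_left hF0.le hD0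
      calc D = 1 * D := (one_mul D).symm
        _ ≤ (l.factorial : ℚ) * D := by
          apply mul_le_mul_of_nonneg_right hlf1 hD0.le
        _ = (l.factorial : ℚ) * fac1 ^ l * facn ^ (n - l) := by rw [hD]; ring
    have hb2 : |(Snd n (δstd n) / 2 - 1) * F' / (((l - 1).factorial : ℚ) * fac1 ^ l * facn ^ (n - l))| ≤ F / D := by
      rw [abs_div, abs_mul]
      rw [abs_of_nonneg (by positivity : (0:ℚ) ≤ F'),
        abs_of_nonneg (by positivity : (0:ℚ) ≤ ((l - 1).factorial : ℚ) * fac1 ^ l * facn ^ (n - l))]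
      have hnum : |Snd n (δstd n) / 2 - 1| * F' ≤ F := by
        calc |Snd n (δstd n) / 2 - 1| * F' ≤ (n:ℚ)^2 * F' :=
              mul_le_mul_of_nonneg_right hc hF'0.le
          _ = F := hq2F'
      apply div_le_div₀ hF0.le hnum hD0
      calc D = 1 * D := (one_mul D).symm
        _ ≤ ((l-1).factorial : ℚ) * D := by
          apply mul_le_mul_of_nonneg_right hlf1' hD0.le
        _ = ((l-1).factorial : ℚ) * fac1 ^ l * facn ^ (n - l) := by rw [hD]; ring
    calc |X| ≤ |F / ((l.factorial : ℚ) * fac1 ^ l * facn ^ (n - l))|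
          + |(Snd n (δstd n) / 2 - 1) * F' / (((l - 1).factorial : ℚ) * fac1 ^ l * facn ^ (n - l))| := abs_add_le _ _
      _ ≤ F / D + F / D := add_le_add hb1 hb2
      _ = 2 * F / D := by ring
  have hXD : |X| * D ≤ 2 * F := by
    calc |X| * D ≤ (2 * F / D) * D := mul_le_mul_of_nonneg_right hXb hD0.le
      _ = 2 * F := div_mul_cancel₀ _ (ne_of_gt hD0)
  -- bound on |a|
  have habs0 : (0:ℚ) ≤ absA (astd n) := by
    rw [absA]
    apply Finset.sum_nonneg
    intro i _
    simp only [astd]; positivity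
  have habs : absA (astd n) ≤ (n:ℚ)^(8*n+1) := by
    rw [absA]
    calc (∑ j : Fin n, astd n j) ≤ ∑ _j : Fin n, (n:ℚ)^(8*n) := by
          apply Finset.sum_le_sum
          intro i _
          simp only [astd]
          exact pow_le_pow_right₀ hq1 (by omega)
      _ = (n:ℚ) * (n:ℚ)^(8*n) := by
          rw [Finset.sum_const, Finset.card_univ, Fintype.card_fin, nsmul_eq_mul]
      _ = (n:ℚ)^(8*n+1) := by rw [pow_succ]; ring
  have hY : (2 * absA (astd n)) ^ l ≤ (2 * (n:ℚ)^(8*n+1)) ^ l := by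
    apply pow_le_pow_left₀ (by linarith) (by linarith)
  have hY0 : (0:ℚ) ≤ (2 * absA (astd n)) ^ l := by positivity
  -- product bound
  have hcard2 : (Finset.univ.filter (fun t : Fin n => ¬(t.val + 1 ≤ n - l))).card = l := by
    have hlt : n - l < n := by omega
    have hfe : Finset.univ.filter (fun t : Fin n => t.val + 1 ≤ n - l)
        = Finset.Iio (⟨n - l, hlt⟩ : Fin n) := by
      ext t
      simp only [Finset.mem_filter, Finset.mem_univ, true_and, Finset.mem_Iio, Fin.lt_def]; omega
    have h1 : (Finset.univ.filter (fun t : Fin n => t.val + 1 ≤ n - l)).card = n - l := by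
      rw [hfe, Fin.card_Iio]
    have h2 := Finset.card_filter_add_card_filter_not
      (s := (Finset.univ : Finset (Fin n))) (p := fun t : Fin n => t.val + 1 ≤ n - l)
    rw [Finset.card_univ, Fintype.card_fin] at h2
    omega
  have hP0 : ∀ i : Fin n, (0:ℚ) < astd n i := by
    intro i; simp only [astd]; positivity
  have hZ0 : (0:ℚ) ≤ ∏ t : Fin n, astd n t ^ (if t.val + 1 ≤ n - l then n else n - 1) := by
    apply Finset.prod_nonneg
    intro i _
    split_ifs <;> exact pow_nonneg (hP0 i).le _
  have hZ : (∏ t : Fin n, astd n t ^ (if t.val + 1 ≤ n - l then n else n - 1)) * (n:ℚ)^(8*l)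
      ≤ (∏ t : Fin n, astd n t) ^ n := by
    have hw : (n:ℚ)^(8*l) = ∏ t : Fin n, (if t.val + 1 ≤ n - l then (1:ℚ) else (n:ℚ)^8) := by
      rw [Finset.prod_ite, Finset.prod_const, Finset.prod_const, one_pow, one_mul, hcard2,
        pow_mul]
    rw [hw, ← Finset.prod_mul_distrib, ← Finset.prod_pow]
    apply Finset.prod_le_prod
    · intro i _
      apply mul_nonneg (pow_nonneg (hP0 i).le _)
      split_ifs
      · exact zero_le_one
      · positivity
    · intro i _
      by_cases h : i.val + 1 ≤ n - l
      · rw [if_pos h, if_pos h, mul_one]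
      · rw [if_neg h, if_neg h]
        have hai : (n:ℚ)^8 ≤ astd n i := by
          have := i.isLt
          simp only [astd]
          exact pow_le_pow_right₀ hq1 (by omega)
        calc astd n i ^ (n-1) * (n:ℚ)^8 ≤ astd n i ^ (n-1) * astd n i := by
              apply mul_le_mul_of_nonneg_left hai (pow_nonneg (hP0 i).le _)
          _ = astd n i ^ n := by rw [← pow_succ]; congr 1; omega
  have hPn0 : (0:ℚ) < (∏ t : Fin n, astd n t) ^ n := by
    apply pow_pos
    exact Finset.prod_pos (fun i _ => hP0 i)
  -- the numeric inequality
  have hnum : 2 * ((2 * (n:ℚ)^(8*n+1)) ^ l) * (n:ℚ)^l < (n:ℚ)^(8*l*n) * (n:ℚ)^(8*l) := by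
    have h2q : (2:ℚ)^(l+1) ≤ (n:ℚ)^(l+1) := pow_le_pow_left₀ (by norm_num) hq2 _
    calc 2 * ((2 * (n:ℚ)^(8*n+1)) ^ l) * (n:ℚ)^l
        = (2:ℚ)^(l+1) * ((n:ℚ)^((8*n+1)*l) * (n:ℚ)^l) := by
          rw [mul_pow, ← pow_mul, pow_succ]; ring
      _ ≤ (n:ℚ)^(l+1) * ((n:ℚ)^((8*n+1)*l) * (n:ℚ)^l) :=
          mul_le_mul_of_nonneg_right h2q (by positivity)
      _ = (n:ℚ)^((l+1) + ((8*n+1)*l + l)) := by ring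
      _ < (n:ℚ)^(8*l*n + 8*l) := by
          apply pow_lt_pow_right₀ hq1'
          have : (l+1) + ((8*n+1)*l + l) = 8*l*n + (3*l + 1) := by ring
          rw [this]
          omega
      _ = (n:ℚ)^(8*l*n) * (n:ℚ)^(8*l) := pow_add _ _ _
  -- assemble
  rw [lt_div_iff₀ (by positivity : (0:ℚ) < facn ^ n)]
  have key : |X * (2 * absA (astd n)) ^ l
        * ∏ t : Fin n, astd n t ^ (if t.val + 1 ≤ n - l then n else n - 1)|
      * facn ^ n * (n:ℚ)^(8*l)
      < (n:ℚ)^(8*l*n) * (∏ t : Fin n, astd n t) ^ n * F * (n:ℚ)^(8*l) := by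
    have habseq : |X * (2 * absA (astd n)) ^ l
          * ∏ t : Fin n, astd n t ^ (if t.val + 1 ≤ n - l then n else n - 1)|
        = |X| * ((2 * absA (astd n)) ^ l
          * ∏ t : Fin n, astd n t ^ (if t.val + 1 ≤ n - l then n else n - 1)) := by
      rw [abs_mul, abs_mul, abs_of_nonneg hY0, abs_of_nonneg hZ0, mul_assoc]
    rw [habseq]
    calc |X| * ((2 * absA (astd n)) ^ l
          * ∏ t : Fin n, astd n t ^ (if t.val + 1 ≤ n - l then n else n - 1))
        * facn ^ n * (n:ℚ)^(8*l)
        = (|X| * D) * ((2 * absA (astd n)) ^ l)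
          * ((∏ t : Fin n, astd n t ^ (if t.val + 1 ≤ n - l then n else n - 1)) * (n:ℚ)^(8*l))
          * (n:ℚ)^l := by
          rw [hfacpow]; ring
      _ ≤ (2 * F) * ((2 * (n:ℚ)^(8*n+1)) ^ l) * ((∏ t : Fin n, astd n t) ^ n) * (n:ℚ)^l := by
          have s1 : (|X| * D) * ((2 * absA (astd n)) ^ l)
              ≤ (2 * F) * ((2 * (n:ℚ)^(8*n+1)) ^ l) := by
            apply mul_le_mul hXD hY hY0 (by positivity)
          have s2 : (|X| * D) * ((2 * absA (astd n)) ^ l)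
              * ((∏ t : Fin n, astd n t ^ (if t.val + 1 ≤ n - l then n else n - 1)) * (n:ℚ)^(8*l))
              ≤ (2 * F) * ((2 * (n:ℚ)^(8*n+1)) ^ l) * ((∏ t : Fin n, astd n t) ^ n) := by
            apply mul_le_mul s1 hZ (mul_nonneg hZ0 (by positivity)) (by positivity)
          apply mul_le_mul_of_nonneg_right s2 (by positivity)
      _ = (2 * ((2 * (n:ℚ)^(8*n+1)) ^ l) * (n:ℚ)^l) * (F * (∏ t : Fin n, astd n t) ^ n) := by
          ring
      _ < ((n:ℚ)^(8*l*n) * (n:ℚ)^(8*l)) * (F * (∏ t : Fin n, astd n t) ^ n) := by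
          apply mul_lt_mul_of_pos_right hnum (by positivity)
      _ = (n:ℚ)^(8*l*n) * (∏ t : Fin n, astd n t) ^ n * F * (n:ℚ)^(8*l) := by ring
  exact lt_of_mul_lt_mul_right key (by positivity)

end
end
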